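/- arXiv:2005.06042 — 4 statements merged into one kernel-verified Lean document; each statement's English description precedes it below -/
import Mathlib

section
/- Let T > 0, 0 < γ ≤ Γ ≤ T, Δt > 0 with K = T/Δt a positive integer and γ/Δt, Γ/Δt positive integers, and η⁺, η⁻ ∈ (0,1]. Let 𝐱^b, 𝐱^r ∈ ℝ^K have nonnegative components, let 𝐝 ∈ ℝ^K have nonnegative components, and assume that for every k ∈ {1,…,K} either d_k = 0 or x^b_k = x^r_k = 0. Set x^b = L𝐱^b, x^r = L𝐱^r, d = L𝐝, and fix y₀ ∈ ℝ and y̲ ∈ ℝ. Then y(x^b,x^r,δ,y₀,t) ≥ y̲ for all δ ∈ D and all t ∈ [0,T] if and only if y_k(𝐱^b,𝐱^r,𝛅,y₀) ≥ y̲ for all 𝛅 ∈ D_K and all k ∈ {0,1,…,K}; indeed inf_{t ∈ [0,T]} inf_{δ ∈ D} y(x^b,x^r,δ,y₀,t) = min_{k ∈ {0,…,K}} min_{𝛅 ∈ D_K} y_k(𝐱^b,𝐱^r,𝛅,y₀). -/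
open MeasureTheory Set

noncomputable section

/-- The continuous-time uncertainty set `D` of measurable frequency-deviation
scenarios `δ : [0,T] → [-1,1]` whose total absolute deviation over every
backward window of length `Γ` is at most `γ`. -/
def Dset (T Γ γ : ℝ) : Set (ℝ → ℝ) :=
  {δ | Measurable δ ∧ (∀ t ∈ Icc (0:ℝ) T, δ t ∈ Icc (-1:ℝ) 1) ∧
    ∀ t ∈ Icc (0:ℝ) T, (∫ s in (max (t - Γ) 0)..t, |δ s|) ≤ γ}

/-- The nonnegative part `D⁺` of the continuous uncertainty set. -/
def DsetPlus (T Γ γ : ℝ) : Set (ℝ → ℝ) :=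
  Dset T Γ γ ∩ {δ | ∀ t ∈ Icc (0:ℝ) T, δ t ∈ Icc (0:ℝ) 1}

/-- The discrete uncertainty set `D_K` (with `0`-based indexing): vectors in
`[-1,1]^K` whose sum of absolute values over each backward window of `W = Γ/Δt`
periods is at most `g = γ/Δt`. -/
def DK (K W g : ℕ) : Set (Fin K → ℝ) :=
  {δ | (∀ l, |δ l| ≤ 1) ∧ ∀ k : Fin K,
    (∑ l ∈ Finset.univ.filter
      (fun l : Fin K => (k : ℕ) + 1 - W ≤ (l : ℕ) ∧ (l : ℕ) ≤ (k : ℕ)), |δ l|) ≤ (g : ℝ)}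

/-- The nonnegative part `D_K⁺` of the discrete uncertainty set. -/
def DKplus (K W g : ℕ) : Set (Fin K → ℝ) :=
  DK K W g ∩ {δ | ∀ l, 0 ≤ δ l}

/-- The lifting operator `L` mapping a vector to the piecewise constant function
with value `v k` on `[kΔt, (k+1)Δt)` (0-based), and `v (K-1)` at `t = KΔt`. -/
def lift (Δt : ℝ) {K : ℕ} (v : Fin K → ℝ) : ℝ → ℝ := fun t =>
  if h : min (⌊t / Δt⌋.toNat) (K - 1) < K then v ⟨min (⌊t / Δt⌋.toNat) (K - 1), h⟩ else 0

/-- The averaging operator `L†` mapping a function to its vector of averages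
over the trading intervals. -/
def avg (Δt : ℝ) (K : ℕ) (w : ℝ → ℝ) : Fin K → ℝ := fun k =>
  (1 / Δt) * ∫ s in (((k : ℕ) : ℝ) * Δt)..((((k : ℕ) : ℝ) + 1) * Δt), w s

/-- The integrand of the continuous-time state-of-charge. -/
def socIntegrand (ηp ηm : ℝ) (xb xr δ d : ℝ → ℝ) (s : ℝ) : ℝ :=
  ηp * max (xb s + δ s * xr s) 0 - (1 / ηm) * max (-(xb s + δ s * xr s)) 0 - d s

/-- The continuous-time state-of-charge `y(x^b, x^r, δ, y₀, t)`. -/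
def soc (ηp ηm : ℝ) (xb xr δ d : ℝ → ℝ) (y0 t : ℝ) : ℝ :=
  y0 + ∫ s in (0:ℝ)..t, socIntegrand ηp ηm xb xr δ d s

/-- The discrete-time state-of-charge `y_k(𝐱^b, 𝐱^r, 𝛅, y₀)` (0-based indexing:
the sum extends over the first `k` components). -/
def ysoc (Δt ηp ηm : ℝ) {K : ℕ} (xb xr δ d : Fin K → ℝ) (y0 : ℝ) (k : ℕ) : ℝ :=
  y0 + Δt * ∑ l ∈ Finset.univ.filter (fun l : Fin K => (l : ℕ) < k),
    (ηp * max (xb l + δ l * xr l) 0 - (1 / ηm) * max (-(xb l + δ l * xr l)) 0 - d l)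

section Helpers

lemma ae_ne_vol (b : ℝ) : ∀ᵐ x : ℝ, x ≠ b := by
  have : (volume ({b} : Set ℝ)) = 0 := measure_singleton b
  filter_upwards [measure_eq_zero_iff_ae_notMem.mp this] with x hx
  simpa using hx

/-- integral of a function constant on the open interval -/
lemma integral_Ioo_const (f : ℝ → ℝ) (c a b : ℝ) (hab : a ≤ b)
    (h : ∀ s ∈ Ioo a b, f s = c) : ∫ s in a..b, f s = (b - a) * c := by
  have : ∫ s in a..b, f s = ∫ s in a..b, c := by
    apply intervalIntegral.integral_congr_ae
    filter_upwards [ae_ne_vol b] with x hx hmem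
    rw [uIoc_of_le hab] at hmem
    exact h x ⟨hmem.1, lt_of_le_of_ne hmem.2 hx⟩
  rw [this, intervalIntegral.integral_const, smul_eq_mul]

lemma intervalIntegrable_Ioo_const (f : ℝ → ℝ) (c a b : ℝ) (hab : a ≤ b)
    (h : ∀ s ∈ Ioo a b, f s = c) : IntervalIntegrable f volume a b := by
  rw [intervalIntegrable_iff, uIoc_of_le hab]
  have : IntegrableOn (fun _ => c) (Ioc a b) volume := by
    exact integrableOn_const measure_Ioc_lt_top.ne
  apply this.congr_fun_ae
  filter_upwards [ae_restrict_mem measurableSet_Ioc, ae_restrict_of_ae (ae_ne_vol b)] with x hx hb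
  exact (h x ⟨hx.1, lt_of_le_of_ne hx.2 hb⟩).symm

/-- interval integrability of a measurable function bounded on `Icc a b`. -/
lemma intervalIntegrable_of_bounded {f : ℝ → ℝ} {C a b : ℝ} (hm : Measurable f)
    (hb : ∀ s ∈ Icc a b, |f s| ≤ C) (hab : a ≤ b) : IntervalIntegrable f volume a b := by
  rw [intervalIntegrable_iff, uIoc_of_le hab]
  apply Measure.integrableOn_of_bounded (M := C) (by simp [measure_Ioc_lt_top.ne])
    hm.aestronglyMeasurable
  filter_upwards [ae_restrict_mem measurableSet_Ioc] with x hx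
  exact hb x ⟨le_of_lt hx.1, hx.2⟩

lemma integral_mono_Ioo {f g : ℝ → ℝ} {a b : ℝ} (hab : a ≤ b)
    (hf : IntervalIntegrable f volume a b) (hg : IntervalIntegrable g volume a b)
    (h : ∀ s ∈ Ioo a b, f s ≤ g s) : (∫ s in a..b, f s) ≤ ∫ s in a..b, g s := by
  rw [intervalIntegral.integral_of_le hab, intervalIntegral.integral_of_le hab,
    MeasureTheory.integral_Ioc_eq_integral_Ioo, MeasureTheory.integral_Ioc_eq_integral_Ioo]
  apply setIntegral_mono_on
  · exact ((intervalIntegrable_iff.mp hf).mono_set (by rw [uIoc_of_le hab]; exact Ioo_subset_Ioc_self))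
  · exact ((intervalIntegrable_iff.mp hg).mono_set (by rw [uIoc_of_le hab]; exact Ioo_subset_Ioc_self))
  · exact measurableSet_Ioo
  · exact h

lemma integral_nonneg_Ioo {f : ℝ → ℝ} {a b : ℝ} (hab : a ≤ b)
    (hf : IntervalIntegrable f volume a b)
    (h : ∀ s ∈ Ioo a b, 0 ≤ f s) : 0 ≤ ∫ s in a..b, f s := by
  have := integral_mono_Ioo hab (intervalIntegrable_const (c := (0:ℝ))) hf (by simpa using h)
  simpa using this

end Helpers


section LiftLemmas

variable {K : ℕ} {Δt : ℝ}

lemma lift_eval (hΔt : 0 < Δt) (v : Fin K → ℝ) (l : Fin K) {s : ℝ}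
    (h1 : (l : ℝ) * Δt ≤ s) (h2 : s < ((l : ℝ) + 1) * Δt) : lift Δt v s = v l := by
  have hfl : ⌊s / Δt⌋ = ((l : ℕ) : ℤ) := by
    rw [Int.floor_eq_iff]
    constructor
    · rw [le_div_iff₀ hΔt]; push_cast; linarith
    · rw [div_lt_iff₀ hΔt]; push_cast; linarith
  have hmin : min (⌊s / Δt⌋.toNat) (K - 1) = (l : ℕ) := by
    rw [hfl]; simp only [Int.toNat_natCast]
    exact min_eq_left (by omega)
  unfold lift
  have hlt : min (⌊s / Δt⌋.toNat) (K - 1) < K := by rw [hmin]; exact l.isLt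
  rw [dif_pos hlt]
  congr 1
  exact Fin.ext hmin

lemma lift_measurable (v : Fin K → ℝ) : Measurable (lift Δt v) := by
  have : lift Δt v = (fun n : ℕ => if h : min n (K - 1) < K then v ⟨min n (K-1), h⟩ else 0)
      ∘ (fun t : ℝ => ⌊t / Δt⌋.toNat) := rfl
  rw [this]
  apply measurable_from_nat.comp
  have h1 : Measurable (fun t : ℝ => ⌊t / Δt⌋) := Int.measurable_floor.comp (measurable_id.div_const Δt)
  exact (show Measurable Int.toNat from fun _ _ => trivial).comp h1

lemma lift_abs (v : Fin K → ℝ) (s : ℝ) : |lift Δt v s| = lift Δt (fun l => |v l|) s := by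
  unfold lift; split <;> simp

lemma lift_abs_le_one (v : Fin K → ℝ) (hv : ∀ l, |v l| ≤ 1) (s : ℝ) : |lift Δt v s| ≤ 1 := by
  unfold lift; split
  · exact hv _
  · simp

lemma lift_abs_le_sum (v : Fin K → ℝ) (s : ℝ) : |lift Δt v s| ≤ ∑ l : Fin K, |v l| := by
  unfold lift; split
  · exact Finset.single_le_sum (f := fun l => |v l|) (fun _ _ => abs_nonneg _) (Finset.mem_univ _)
  · simp [Finset.sum_nonneg (fun l _ => abs_nonneg (v l))]

end LiftLemmas

section SumHelpers

lemma sum_fin_lt (K k : ℕ) (hk : k ≤ K) (H : Fin K → ℝ) :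
    ∑ l ∈ Finset.univ.filter (fun l : Fin K => (l : ℕ) < k), H l
      = ∑ i ∈ Finset.range k, (if hi : i < K then H ⟨i, hi⟩ else 0) := by
  rw [Finset.sum_filter]
  rw [show (∑ a : Fin K, if (a:ℕ) < k then H a else 0)
      = ∑ i ∈ Finset.range K, (if hi : i < K then (if i < k then H ⟨i, hi⟩ else 0) else 0) from ?_]
  · rw [← Finset.sum_filter_add_sum_filter_not (Finset.range K) (fun i => i < k)]
    have h1 : (Finset.range K).filter (fun i => i < k) = Finset.range k := by
      ext i; simp; omega
    have h2 : ∀ i ∈ (Finset.range K).filter (fun i => ¬ i < k),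
        (if hi : i < K then (if i < k then H ⟨i, hi⟩ else 0) else 0) = 0 := by
      intro i hi; simp at hi; rw [dif_pos hi.1, if_neg (by omega)]
    rw [Finset.sum_eq_zero h2, add_zero, h1]
    apply Finset.sum_congr rfl
    intro i hi; simp at hi
    simp only [dif_pos (lt_of_lt_of_le hi hk), if_pos hi]
  · rw [← Fin.sum_univ_eq_sum_range (fun i => if hi : i < K then (if i < k then H ⟨i, hi⟩ else 0) else 0) K]
    apply Finset.sum_congr rfl
    intro l _
    rw [dif_pos l.isLt]

lemma sum_fin_win (K p q : ℕ) (hq : q < K) (h : ℕ → ℝ) :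
    ∑ l ∈ Finset.univ.filter (fun l : Fin K => p ≤ (l : ℕ) ∧ (l : ℕ) ≤ q), h (l : ℕ)
      = ∑ i ∈ Finset.Ico p (q + 1), h i := by
  rw [Finset.sum_filter]
  rw [Fin.sum_univ_eq_sum_range (fun i => if p ≤ i ∧ i ≤ q then h i else 0) K]
  rw [← Finset.sum_filter]
  congr 1
  ext i; simp; omega

end SumHelpers

section Chord

lemma min_id (ηp ηm z : ℝ) (hp : 0 < ηp) (hp1 : ηp ≤ 1) (hm : 0 < ηm) (hm1 : ηm ≤ 1) :
    ηp * max z 0 - (1/ηm) * max (-z) 0 = min (ηp * z) (z / ηm) := by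
  rcases le_total 0 z with hz | hz
  · rw [max_eq_left hz, max_eq_right (by linarith), min_eq_left]
    · ring
    · rw [div_eq_mul_inv]
      have h1 : (1:ℝ) ≤ ηm⁻¹ := by rw [le_inv_comm₀] <;> simpa
      nlinarith
  · rw [max_eq_right hz, max_eq_left (by linarith), min_eq_right]
    · field_simp; ring
    · have h1 : (1:ℝ) ≤ ηm⁻¹ := by rw [le_inv_comm₀] <;> simpa
      rw [div_eq_mul_inv]
      nlinarith

/-- the chord bound: concavity + monotonicity of the per-period SOC rate. -/
lemma chord (ηp ηm a r dd u : ℝ) (hp : 0 < ηp) (hp1 : ηp ≤ 1) (hm : 0 < ηm) (hm1 : ηm ≤ 1)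
    (ha : 0 ≤ a) (hr : 0 ≤ r) (hu : |u| ≤ 1) :
    (1 - |u|) * (ηp * max (a + 0 * r) 0 - (1/ηm) * max (-(a + 0 * r)) 0 - dd)
      + |u| * (ηp * max (a + (-1) * r) 0 - (1/ηm) * max (-(a + (-1) * r)) 0 - dd)
    ≤ ηp * max (a + u * r) 0 - (1/ηm) * max (-(a + u * r)) 0 - dd := by
  have hv0 : 0 ≤ |u| := abs_nonneg u
  have huv : -|u| ≤ u := neg_abs_le u
  rw [min_id ηp ηm (a + 0 * r) hp hp1 hm hm1, min_id ηp ηm (a + (-1) * r) hp hp1 hm hm1,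
    min_id ηp ηm (a + u * r) hp hp1 hm hm1]
  set v := |u| with hv
  have key : (1 - v) * min (ηp * (a + 0 * r)) ((a + 0 * r) / ηm)
      + v * min (ηp * (a + (-1) * r)) ((a + (-1) * r) / ηm)
      ≤ min (ηp * (a + u * r)) ((a + u * r) / ηm) := by
    apply le_min
    · have l1 := min_le_left (ηp * (a + 0 * r)) ((a + 0 * r) / ηm)
      have l2 := min_le_left (ηp * (a + (-1) * r)) ((a + (-1) * r) / ηm)
      have h3 : 0 ≤ ηp * ((u + v) * r) := by
        apply mul_nonneg hp.le; apply mul_nonneg (by linarith) hr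
      nlinarith [mul_le_mul_of_nonneg_left l1 (by linarith : (0:ℝ) ≤ 1 - v),
        mul_le_mul_of_nonneg_left l2 hv0]
    · have l1 := min_le_right (ηp * (a + 0 * r)) ((a + 0 * r) / ηm)
      have l2 := min_le_right (ηp * (a + (-1) * r)) ((a + (-1) * r) / ηm)
      have h3 : 0 ≤ ((u + v) * r) / ηm := by
        apply div_nonneg _ hm.le; apply mul_nonneg (by linarith) hr
      have h4 : (a + u * r) / ηm = (a + 0*r)/ηm + ((u+v)*r)/ηm - (v*r)/ηm := by
        field_simp; ring
      have h5 : (a + (-1) * r)/ηm = (a+0*r)/ηm - r/ηm := by field_simp; ring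
      have h6 : (v*r)/ηm = v * (r/ηm) := by ring
      nlinarith [mul_le_mul_of_nonneg_left l1 (by linarith : (0:ℝ) ≤ 1 - v),
        mul_le_mul_of_nonneg_left l2 hv0]
  nlinarith [key]

end Chord

section FloorInt

lemma floor_piece1 (x : ℝ) : ∀ θ ∈ Ioo (0:ℝ) (Int.fract x), ((⌊x - θ⌋ : ℤ) : ℝ) = ((⌊x⌋ : ℤ) : ℝ) := by
  intro θ hθ
  congr 1
  rw [Int.floor_eq_iff]
  have h1 : Int.fract x = x - ⌊x⌋ := Int.self_sub_floor x ▸ rfl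
  constructor
  · have := hθ.2; rw [Int.fract] at this; linarith
  · have := hθ.1
    have h2 : x - θ < x := by linarith
    have := Int.lt_floor_add_one x
    linarith

lemma floor_piece2 (x : ℝ) : ∀ θ ∈ Ioo (Int.fract x) (1:ℝ), ((⌊x - θ⌋ : ℤ) : ℝ) = ((⌊x⌋ : ℤ) : ℝ) - 1 := by
  intro θ hθ
  have : (⌊x - θ⌋ : ℤ) = ⌊x⌋ - 1 := by
    rw [Int.floor_eq_iff]
    have := hθ.1; have := hθ.2
    rw [Int.fract] at *
    constructor
    · push_cast; have := Int.floor_le x; linarith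
    · push_cast; linarith
  rw [this]; push_cast; ring

lemma floor_II (x : ℝ) : IntervalIntegrable (fun θ => ((⌊x - θ⌋ : ℤ) : ℝ)) volume 0 1 := by
  have h1 : IntervalIntegrable (fun θ => ((⌊x - θ⌋ : ℤ) : ℝ)) volume 0 (Int.fract x) :=
    intervalIntegrable_Ioo_const _ _ _ _ (Int.fract_nonneg x) (floor_piece1 x)
  have h2 : IntervalIntegrable (fun θ => ((⌊x - θ⌋ : ℤ) : ℝ)) volume (Int.fract x) 1 :=
    intervalIntegrable_Ioo_const _ _ _ _ (le_of_lt (Int.fract_lt_one x)) (floor_piece2 x)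
  exact h1.trans h2

lemma floor_integral (x : ℝ) : (∫ θ in (0:ℝ)..1, ((⌊x - θ⌋ : ℤ) : ℝ)) = x - 1 := by
  have h1 : IntervalIntegrable (fun θ => ((⌊x - θ⌋ : ℤ) : ℝ)) volume 0 (Int.fract x) :=
    intervalIntegrable_Ioo_const _ _ _ _ (Int.fract_nonneg x) (floor_piece1 x)
  have h2 : IntervalIntegrable (fun θ => ((⌊x - θ⌋ : ℤ) : ℝ)) volume (Int.fract x) 1 :=
    intervalIntegrable_Ioo_const _ _ _ _ (le_of_lt (Int.fract_lt_one x)) (floor_piece2 x)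
  rw [← intervalIntegral.integral_add_adjacent_intervals h1 h2]
  rw [integral_Ioo_const _ _ _ _ (Int.fract_nonneg x) (floor_piece1 x),
    integral_Ioo_const _ _ _ _ (le_of_lt (Int.fract_lt_one x)) (floor_piece2 x)]
  have : Int.fract x = x - ⌊x⌋ := rfl
  rw [this]; ring

end FloorInt

section TU
set_option maxHeartbeats 2000000 in

lemma TU_round (n W g : ℕ) (ν : ℕ → ℝ) (hν0 : ∀ i, 0 ≤ ν i) (hν1 : ∀ i, ν i ≤ 1)
    (hwin : ∀ p q : ℕ, q ≤ p + W → (∑ i ∈ Finset.Ico p q, ν i) ≤ (g:ℝ))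
    (e : ℕ → ℝ) :
    ∃ E : Finset ℕ, E ⊆ Finset.range n ∧
      (∀ p q : ℕ, q ≤ p + W → (((Finset.Ico p q).filter (· ∈ E)).card : ℝ) ≤ g) ∧
      (∑ i ∈ E, e i) ≤ ∑ i ∈ Finset.range n, ν i * e i := by
  classical
  set F : ℕ → ℝ := fun m => ∑ i ∈ Finset.range m, ν i with hF
  have hFsucc : ∀ i, F (i+1) = F i + ν i := by
    intro i; simp [hF, Finset.sum_range_succ]
  set D : ℕ → ℝ → ℤ := fun i θ => ⌊F (i+1) - θ⌋ - ⌊F i - θ⌋ with hD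
  have hD01 : ∀ i θ, D i θ = 0 ∨ D i θ = 1 := by
    intro i θ
    have h1 : ⌊F i - θ⌋ ≤ ⌊F (i+1) - θ⌋ := Int.floor_le_floor (by rw [hFsucc]; linarith [hν0 i])
    have h2 : ⌊F (i+1) - θ⌋ ≤ ⌊F i - θ + 1⌋ := Int.floor_le_floor (by rw [hFsucc]; linarith [hν1 i])
    rw [show F i - θ + 1 = F i - θ + (1:ℤ) by push_cast; ring, Int.floor_add_intCast] at h2
    simp only [hD]; omega
  have hFdiff : ∀ p q : ℕ, p ≤ q → F q - F p = ∑ i ∈ Finset.Ico p q, ν i := by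
    intro p q hpq; rw [Finset.sum_Ico_eq_sub _ hpq]
  have htele : ∀ (θ : ℝ) (p q : ℕ), p ≤ q →
      ∑ i ∈ Finset.Ico p q, D i θ = ⌊F q - θ⌋ - ⌊F p - θ⌋ := by
    intro θ p q hpq
    rw [Finset.sum_Ico_eq_sub _ hpq]
    simp only [hD]
    rw [Finset.sum_range_sub (fun m => ⌊F m - θ⌋), Finset.sum_range_sub (fun m => ⌊F m - θ⌋)]
    ring
  -- existence of a good θ
  have hexist : ∃ θ ∈ Ioo (0:ℝ) 1,
      (∑ i ∈ Finset.range n, ((D i θ : ℤ) : ℝ) * e i) ≤ ∑ i ∈ Finset.range n, ν i * e i := by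
    by_contra hno
    push_neg at hno
    set A : ℝ := ∑ i ∈ Finset.range n, ν i * e i with hA
    have hterm_II : ∀ i, IntervalIntegrable (fun θ => ((D i θ : ℤ) : ℝ) * e i) volume 0 1 := by
      intro i
      have : (fun θ => ((D i θ : ℤ) : ℝ) * e i)
          = fun θ => (((⌊F (i+1) - θ⌋ : ℤ) : ℝ) - ((⌊F i - θ⌋ : ℤ) : ℝ)) * e i := by
        funext θ; simp only [hD]; push_cast; ring
      rw [this]
      exact ((floor_II (F (i+1))).sub (floor_II (F i))).mul_const _
    have hsum_II : IntervalIntegrable (fun θ => ∑ i ∈ Finset.range n, ((D i θ : ℤ) : ℝ) * e i)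
        volume 0 1 := by
      have hrw : (fun θ => ∑ i ∈ Finset.range n, ((D i θ : ℤ) : ℝ) * e i)
          = ∑ i ∈ Finset.range n, (fun θ => ((D i θ : ℤ) : ℝ) * e i) := by
        funext θ; simp
      rw [hrw]
      exact IntervalIntegrable.sum _ (fun i _ => hterm_II i)
    have hint : (∫ θ in (0:ℝ)..1, ∑ i ∈ Finset.range n, ((D i θ : ℤ) : ℝ) * e i) = A := by
      rw [intervalIntegral.integral_finset_sum (fun i _ => hterm_II i)]
      rw [hA]
      apply Finset.sum_congr rfl
      intro i _
      have : (fun θ => ((D i θ : ℤ) : ℝ) * e i)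
          = fun θ => (((⌊F (i+1) - θ⌋ : ℤ) : ℝ) - ((⌊F i - θ⌋ : ℤ) : ℝ)) * e i := by
        funext θ; simp only [hD]; push_cast; ring
      rw [this, intervalIntegral.integral_mul_const,
        intervalIntegral.integral_sub (floor_II (F (i+1))) (floor_II (F i)),
        floor_integral, floor_integral, hFsucc]
      ring
    have hpos : 0 < ∫ θ in (0:ℝ)..1,
        ((∑ i ∈ Finset.range n, ((D i θ : ℤ) : ℝ) * e i) - A) := by
      apply intervalIntegral.intervalIntegral_pos_of_pos_on
        (hsum_II.sub (intervalIntegrable_const)) _ (by norm_num)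
      intro θ hθ
      have := hno θ hθ
      linarith
    rw [intervalIntegral.integral_sub hsum_II intervalIntegrable_const, hint] at hpos
    simp at hpos
  obtain ⟨θ, hθ, hval⟩ := hexist
  refine ⟨(Finset.range n).filter (fun i => D i θ = 1), Finset.filter_subset _ _, ?_, ?_⟩
  · intro p q hpq
    rcases le_or_gt q p with h | h
    · simp [Finset.Ico_eq_empty_of_le h]
    -- card ≤ g
    have hcard : ((((Finset.Ico p q).filter (· ∈ (Finset.range n).filter (fun i => D i θ = 1))).card) : ℤ)
        ≤ ∑ i ∈ Finset.Ico p q, D i θ := by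
      rw [Finset.card_filter]
      push_cast
      apply Finset.sum_le_sum
      intro i _
      by_cases hi : i ∈ (Finset.range n).filter (fun i => D i θ = 1)
      · rw [if_pos hi]
        have := (Finset.mem_filter.mp hi).2
        omega
      · rw [if_neg hi]
        rcases hD01 i θ with h0 | h1 <;> omega
    have hbound : ∑ i ∈ Finset.Ico p q, D i θ ≤ (g : ℤ) := by
      rw [htele θ p q h.le]
      have hF' : F q - θ ≤ (F p - θ) + (g : ℤ) := by
        have := hwin p q hpq
        have := hFdiff p q h.le
        push_cast
        linarith
      have := Int.floor_le_floor hF'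
      rw [Int.floor_add_intCast] at this
      omega
    have : ((((Finset.Ico p q).filter (· ∈ (Finset.range n).filter (fun i => D i θ = 1))).card) : ℤ) ≤ (g:ℤ) :=
      le_trans hcard hbound
    exact_mod_cast this
  · -- value
    have : ∑ i ∈ (Finset.range n).filter (fun i => D i θ = 1), e i
        = ∑ i ∈ Finset.range n, ((D i θ : ℤ) : ℝ) * e i := by
      rw [Finset.sum_filter]
      apply Finset.sum_congr rfl
      intro i _
      rcases hD01 i θ with h0 | h1
      · rw [h0, if_neg (by omega)]; simp
      · rw [h1, if_pos rfl]; simp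
    rw [this]; exact hval

end TU

set_option maxHeartbeats 1000000
section GridLemmas

variable {K : ℕ} {Δt : ℝ}

/-- extension of a `Fin K` vector to `ℕ` by zero. -/
def wnat {K : ℕ} (v : Fin K → ℝ) : ℕ → ℝ := fun i => if h : i < K then v ⟨i, h⟩ else 0

lemma lift_cell_II (hΔt : 0 < Δt) (v : Fin K → ℝ) {i : ℕ} (hi : i < K) {x y : ℝ}
    (hx : (i:ℝ)*Δt ≤ x) (hxy : x ≤ y) (hy : y ≤ ((i:ℝ)+1)*Δt) :
    IntervalIntegrable (fun s => lift Δt v s) volume x y := by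
  apply intervalIntegrable_Ioo_const _ (v ⟨i, hi⟩) _ _ hxy
  intro s hs
  exact lift_eval hΔt v ⟨i, hi⟩ (le_trans hx hs.1.le) (lt_of_lt_of_le hs.2 hy)

lemma lift_cell_integral (hΔt : 0 < Δt) (v : Fin K → ℝ) {i : ℕ} (hi : i < K) {x y : ℝ}
    (hx : (i:ℝ)*Δt ≤ x) (hxy : x ≤ y) (hy : y ≤ ((i:ℝ)+1)*Δt) :
    (∫ s in x..y, lift Δt v s) = (y - x) * v ⟨i, hi⟩ := by
  apply integral_Ioo_const _ _ _ _ hxy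
  intro s hs
  exact lift_eval hΔt v ⟨i, hi⟩ (le_trans hx hs.1.le) (lt_of_lt_of_le hs.2 hy)

lemma lift_grid_integral (hΔt : 0 < Δt) (v : Fin K → ℝ) (p q : ℕ) (hpq : p ≤ q) (hqK : q ≤ K) :
    (∫ s in ((p:ℝ)*Δt)..((q:ℝ)*Δt), lift Δt v s) = Δt * ∑ i ∈ Finset.Ico p q, wnat v i := by
  have key : ∀ j : ℕ, j < q - p → (∫ s in (((p+j:ℕ):ℝ)*Δt)..(((p+j+1:ℕ):ℝ)*Δt), lift Δt v s)
      = Δt * wnat v (p+j) := by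
    intro j hj
    have hik : p + j < K := by omega
    rw [lift_cell_integral hΔt v hik (by push_cast; linarith) (by push_cast; nlinarith)
      (by push_cast; linarith)]
    unfold wnat
    rw [dif_pos hik]
    push_cast; ring
  have hadj := intervalIntegral.sum_integral_adjacent_intervals
    (a := fun j => ((p+j:ℕ):ℝ)*Δt) (n := q - p) (f := fun s => lift Δt v s) (μ := volume) ?_
  · have h0 : ((p+0:ℕ):ℝ)*Δt = (p:ℝ)*Δt := by norm_num
    have h1 : ((p+(q-p):ℕ):ℝ)*Δt = (q:ℝ)*Δt := by
      congr 2; push_cast [Nat.add_sub_cancel' hpq]; ring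
    rw [h0, h1] at hadj
    rw [← hadj, Finset.sum_Ico_eq_sum_range, Finset.mul_sum]
    apply Finset.sum_congr rfl
    intro j hj
    simp only [Finset.mem_range] at hj
    rw [show ((p + (j+1) :ℕ):ℝ) = ((p + j + 1 : ℕ):ℝ) by push_cast; ring]
    exact key j hj
  · intro j hj
    have hik : p + j < K := by omega
    apply lift_cell_II hΔt v hik (le_refl _) (by push_cast; nlinarith) (by push_cast; linarith)

lemma lift_grid_II (hΔt : 0 < Δt) (v : Fin K → ℝ) (p q : ℕ) (hpq : p ≤ q) (hqK : q ≤ K) :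
    IntervalIntegrable (fun s => lift Δt v s) volume ((p:ℝ)*Δt) ((q:ℝ)*Δt) := by
  have hadj := IntervalIntegrable.trans_iterate
    (a := fun j => ((p+j:ℕ):ℝ)*Δt) (n := q - p) (f := fun s => lift Δt v s) (μ := volume) ?_
  · have h0 : ((p+0:ℕ):ℝ)*Δt = (p:ℝ)*Δt := by norm_num
    have h1 : ((p+(q-p):ℕ):ℝ)*Δt = (q:ℝ)*Δt := by
      congr 2; push_cast [Nat.add_sub_cancel' hpq]; ring
    rwa [h0, h1] at hadj
  · intro j hj
    have hik : p + j < K := by omega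
    apply lift_cell_II hΔt v hik (le_refl _) (by push_cast; nlinarith) (by push_cast; linarith)

/-- the continuous window constraint for a lifted discrete scenario. -/
lemma lift_window_bound (hΔt : 0 < Δt) (W g : ℕ) (hg : 1 ≤ g) (v : Fin K → ℝ)
    (hv1 : ∀ l : Fin K, |v l| ≤ 1)
    (hwin : ∀ p q : ℕ, q ≤ p + W → (∑ i ∈ Finset.Ico p q, wnat (fun l => |v l|) i) ≤ (g:ℝ))
    {a b : ℝ} (ha : 0 ≤ a) (hab : a ≤ b) (hbK : b ≤ K * Δt) (hwidth : b - a ≤ W * Δt) :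
    (∫ s in a..b, |lift Δt v s|) ≤ (g:ℝ) * Δt := by
  have habs : ∀ s, |lift Δt v s| = lift Δt (fun l => |v l|) s := lift_abs v
  simp only [habs]
  set w := fun l : Fin K => |v l| with hw
  have hw0 : ∀ i, 0 ≤ wnat w i := by
    intro i; unfold wnat; split
    · exact abs_nonneg _
    · exact le_refl 0
  have hw1 : ∀ i, wnat w i ≤ 1 := by
    intro i; unfold wnat; split
    · exact hv1 _
    · linarith
  -- trivial case
  rcases eq_or_lt_of_le hab with rfl | hab'
  · simp only [intervalIntegral.integral_same]
    exact mul_nonneg (Nat.cast_nonneg g) hΔt.le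
  have haK : a < K * Δt := lt_of_lt_of_le hab' hbK
  set j : ℕ := ⌊a / Δt⌋.toNat with hj
  have hfl0 : (0:ℤ) ≤ ⌊a / Δt⌋ := Int.floor_nonneg.mpr (div_nonneg ha hΔt.le)
  have hja : (j:ℝ)*Δt ≤ a := by
    have h1 : ((j:ℤ):ℝ) ≤ a / Δt := by
      rw [Int.toNat_of_nonneg hfl0]; exact Int.floor_le _
    calc (j:ℝ)*Δt ≤ (a/Δt)*Δt := by
          apply mul_le_mul_of_nonneg_right _ hΔt.le
          exact_mod_cast h1
      _ = a := by field_simp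
  have haj : a < ((j:ℝ)+1)*Δt := by
    have h1 : a / Δt < (j:ℝ)+1 := by
      have := Int.lt_floor_add_one (a/Δt)
      have h2 : ((j:ℤ):ℝ) = ((⌊a/Δt⌋:ℤ):ℝ) := by rw [Int.toNat_of_nonneg hfl0]
      push_cast at h2 ⊢
      rw [h2]; exact this
    calc a = (a/Δt)*Δt := by field_simp
      _ < ((j:ℝ)+1)*Δt := by apply mul_lt_mul_of_pos_right h1 hΔt
  have hjK : j < K := by
    by_contra hjK
    push_neg at hjK
    have : (K:ℝ)*Δt ≤ (j:ℝ)*Δt := by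
      apply mul_le_mul_of_nonneg_right _ hΔt.le; exact_mod_cast hjK
    linarith
  rcases le_or_gt b (((j:ℝ)+1)*Δt) with hbj | hbj
  · -- b in the same cell
    rw [lift_cell_integral hΔt w hjK hja hab hbj]
    have h1 : b - a ≤ Δt := by linarith
    have h2 : w ⟨j, hjK⟩ ≤ 1 := hv1 _
    have h3 : 0 ≤ w ⟨j, hjK⟩ := abs_nonneg _
    have hg' : (1:ℝ) ≤ (g:ℝ) := by exact_mod_cast hg
    nlinarith
  · -- b beyond the cell of a
    set q : ℕ := ⌊b / Δt⌋.toNat with hq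
    have hflb0 : (0:ℤ) ≤ ⌊b / Δt⌋ :=
      Int.floor_nonneg.mpr (div_nonneg (le_trans ha hab'.le) hΔt.le)
    have hqb : (q:ℝ)*Δt ≤ b := by
      have h1 : ((q:ℤ):ℝ) ≤ b / Δt := by
        rw [Int.toNat_of_nonneg hflb0]; exact Int.floor_le _
      calc (q:ℝ)*Δt ≤ (b/Δt)*Δt := by
            apply mul_le_mul_of_nonneg_right _ hΔt.le; exact_mod_cast h1
        _ = b := by field_simp
    have hbq : b < ((q:ℝ)+1)*Δt := by
      have h1 : b / Δt < (q:ℝ)+1 := by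
        have := Int.lt_floor_add_one (b/Δt)
        have h2 : ((q:ℤ):ℝ) = ((⌊b/Δt⌋:ℤ):ℝ) := by rw [Int.toNat_of_nonneg hflb0]
        push_cast at h2 ⊢
        rw [h2]; exact this
      calc b = (b/Δt)*Δt := by field_simp
        _ < ((q:ℝ)+1)*Δt := by apply mul_lt_mul_of_pos_right h1 hΔt
    have hqK : q ≤ K := by
      by_contra hc
      push_neg at hc
      have : ((K+1:ℕ):ℝ)*Δt ≤ (q:ℝ)*Δt := by
        apply mul_le_mul_of_nonneg_right _ hΔt.le; exact_mod_cast hc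
      push_cast at this; linarith
    have hjq : j + 1 ≤ q := by
      by_contra hc
      push_neg at hc
      have : q ≤ j := by omega
      have : (q:ℝ)*Δt ≤ (j:ℝ)*Δt := by
        apply mul_le_mul_of_nonneg_right _ hΔt.le; exact_mod_cast this
      linarith
    have hqjW : q ≤ j + W := by
      by_contra hc
      push_neg at hc
      have h1 : ((j+W+1:ℕ):ℝ)*Δt ≤ (q:ℝ)*Δt := by
        apply mul_le_mul_of_nonneg_right _ hΔt.le; exact_mod_cast hc
      push_cast at h1
      linarith
    clear_value j q
    -- split the integral into three pieces
    have hIq : IntervalIntegrable (fun s => lift Δt w s) volume ((q:ℝ)*Δt) b := by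
      rcases eq_or_lt_of_le hqK with heq | hqK'
      · have hbq' : b = (q:ℝ)*Δt := by
          apply le_antisymm _ hqb
          rw [heq]; push_cast; exact hbK
        rw [hbq']
      · exact lift_cell_II hΔt w hqK' (le_refl _) hqb (by linarith)
    have hImid : IntervalIntegrable (fun s => lift Δt w s) volume (((j:ℝ)+1)*Δt) ((q:ℝ)*Δt) := by
      have h1 : (((j+1:ℕ)):ℝ)*Δt = ((j:ℝ)+1)*Δt := by push_cast; ring
      have := lift_grid_II hΔt w (j+1) q hjq hqK
      rwa [h1] at this
    have hIa : IntervalIntegrable (fun s => lift Δt w s) volume a (((j:ℝ)+1)*Δt) := by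
      exact lift_cell_II hΔt w hjK hja (by linarith) (le_refl _)
    have hsplit : (∫ s in a..b, lift Δt w s)
        = (∫ s in a..(((j:ℝ)+1)*Δt), lift Δt w s)
          + (∫ s in (((j:ℝ)+1)*Δt)..((q:ℝ)*Δt), lift Δt w s)
          + (∫ s in ((q:ℝ)*Δt)..b, lift Δt w s) := by
      have e1 := intervalIntegral.integral_add_adjacent_intervals hIa hImid
      have e2 := intervalIntegral.integral_add_adjacent_intervals (hIa.trans hImid) hIq
      rw [← e2, ← e1]
    rw [hsplit]
    have hT1 : (∫ s in a..(((j:ℝ)+1)*Δt), lift Δt w s) = (((j:ℝ)+1)*Δt - a) * w ⟨j, hjK⟩ :=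
      lift_cell_integral hΔt w hjK hja (by linarith) (le_refl _)
    have hT2 : (∫ s in (((j:ℝ)+1)*Δt)..((q:ℝ)*Δt), lift Δt w s)
        = Δt * ∑ i ∈ Finset.Ico (j+1) q, wnat w i := by
      have h1 : (((j+1:ℕ)):ℝ)*Δt = ((j:ℝ)+1)*Δt := by push_cast; ring
      have := lift_grid_integral hΔt w (j+1) q hjq hqK
      rwa [h1] at this
    have hT3 : (∫ s in ((q:ℝ)*Δt)..b, lift Δt w s) = (b - (q:ℝ)*Δt) * wnat w q := by
      rcases eq_or_lt_of_le hqK with heq | hqK'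
      · have hbq' : b = (q:ℝ)*Δt := by
          apply le_antisymm _ hqb
          rw [heq]; push_cast; exact hbK
        rw [hbq']; simp
      · rw [lift_cell_integral hΔt w hqK' (le_refl _) hqb (by linarith)]
        unfold wnat; rw [dif_pos hqK']
    rw [hT1, hT2, hT3]
    have hwj : wnat w j = w ⟨j, hjK⟩ := by unfold wnat; rw [dif_pos hjK]
    have hsmid0 : (0:ℝ) ≤ ∑ i ∈ Finset.Ico (j+1) q, wnat w i :=
      Finset.sum_nonneg (fun i _ => hw0 i)
    rcases eq_or_lt_of_le hqjW with hqW | hcoarse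
    · -- q = j + W : convex-combination case
      have hqr : ((q:ℕ):ℝ) = (j:ℝ) + (W:ℝ) := by rw [hqW]; push_cast; ring
      have hθ : b - (q:ℝ)*Δt ≤ a - (j:ℝ)*Δt := by
        have : (q:ℝ)*Δt = (j:ℝ)*Δt + (W:ℝ)*Δt := by rw [hqr]; ring
        linarith
      have hsum1 := hwin j q (by omega)
      have hsum2 := hwin (j+1) (q+1) (by omega)
      rw [Finset.sum_eq_sum_Ico_succ_bot (by omega : j < q) (wnat w)] at hsum1
      rw [Finset.sum_Ico_succ_top (by omega : j + 1 ≤ q) (wnat w)] at hsum2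
      set α := a - (j:ℝ)*Δt with hα
      set β := b - (q:ℝ)*Δt with hβ
      have hα0 : 0 ≤ α := by simp only [hα]; linarith
      have hαΔ : α ≤ Δt := by simp only [hα]; linarith
      have hβ0 : 0 ≤ β := by simp only [hβ]; linarith
      have hp1 : 0 ≤ (Δt - α) * ((g:ℝ) - (wnat w j + ∑ i ∈ Finset.Ico (j+1) q, wnat w i)) :=
        mul_nonneg (by linarith) (by linarith)
      have hp2 : 0 ≤ α * ((g:ℝ) - ((∑ i ∈ Finset.Ico (j+1) q, wnat w i) + wnat w q)) :=
        mul_nonneg hα0 (by linarith)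
      have hp3 : 0 ≤ (α - β) * wnat w q := mul_nonneg (by linarith) (hw0 q)
      have hT1' : ((j:ℝ)+1)*Δt - a = Δt - α := by simp only [hα]; ring
      rw [hT1', ← hwj]
      nlinarith [hw0 j, hw0 q]
    · -- q + 1 ≤ j + W : coarse case
      have hsum := hwin j (q+1) (by omega)
      rw [Finset.sum_Ico_succ_top (by omega : j ≤ q) (wnat w)] at hsum
      rw [Finset.sum_eq_sum_Ico_succ_bot (by omega : j < q) (wnat w)] at hsum
      have h1 : ((j:ℝ)+1)*Δt - a ≤ Δt := by linarith
      have h2 : 0 ≤ ((j:ℝ)+1)*Δt - a := by linarith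
      have h3 : 0 ≤ b - (q:ℝ)*Δt := by linarith
      have h4 : b - (q:ℝ)*Δt ≤ Δt := by linarith
      rw [← hwj]
      nlinarith [hw0 j, hw0 q]

end GridLemmas

section Realization

variable {K : ℕ} {Δt : ℝ}

lemma DK_window_nat {W g : ℕ} (hg : 1 ≤ g) (δv : Fin K → ℝ) (hδv : δv ∈ DK K W g) :
    ∀ p q : ℕ, q ≤ p + W → (∑ i ∈ Finset.Ico p q, wnat (fun l => |δv l|) i) ≤ (g:ℝ) := by
  intro p q hpq
  set w := wnat (fun l => |δv l|) with hw
  have hw0 : ∀ i, 0 ≤ w i := by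
    intro i; simp only [hw]; unfold wnat; split
    · exact abs_nonneg _
    · exact le_refl 0
  rcases le_or_gt q p with h | h
  · rw [Finset.Ico_eq_empty (by omega)]
    simp
  set q' := min q K with hq'
  have hsum_eq : ∑ i ∈ Finset.Ico p q, w i = ∑ i ∈ Finset.Ico p q', w i := by
    symm
    apply Finset.sum_subset
    · apply Finset.Ico_subset_Ico (le_refl p) (by omega)
    · intro i hi hni
      simp only [Finset.mem_Ico] at hi hni
      simp only [hw]; unfold wnat
      rw [dif_neg (by omega)]
  rw [hsum_eq]
  rcases le_or_gt q' p with h' | h'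
  · rw [Finset.Ico_eq_empty (by omega)]
    simp
  -- p < q' ≤ K, so q' - 1 < K is a valid index
  have hq'K : q' - 1 < K := by omega
  have hDK := hδv.2 ⟨q' - 1, hq'K⟩
  simp only [Fin.val_mk] at hDK
  have habs : ∀ l : Fin K, |δv l| = w (l : ℕ) := by
    intro l
    simp only [hw]; unfold wnat
    rw [dif_pos l.isLt]
  rw [Finset.sum_congr rfl (fun l _ => habs l)] at hDK
  rw [sum_fin_win K (q' - 1 + 1 - W) (q' - 1) hq'K w] at hDK
  calc ∑ i ∈ Finset.Ico p q', w i
      ≤ ∑ i ∈ Finset.Ico (q' - 1 + 1 - W) (q' - 1 + 1), w i := by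
        apply Finset.sum_le_sum_of_subset_of_nonneg
        · apply Finset.Ico_subset_Ico <;> omega
        · intro i _ _; exact hw0 i
    _ ≤ (g:ℝ) := hDK

lemma soc_lift_grid (hΔt : 0 < Δt) (ηp ηm : ℝ) (xb xr d δv : Fin K → ℝ) (y0 : ℝ)
    (k : ℕ) (hk : k ≤ K) :
    soc ηp ηm (lift Δt xb) (lift Δt xr) (lift Δt δv) (lift Δt d) y0 ((k:ℝ)*Δt)
      = ysoc Δt ηp ηm xb xr δv d y0 k := by
  unfold soc ysoc
  congr 1
  set f := socIntegrand ηp ηm (lift Δt xb) (lift Δt xr) (lift Δt δv) (lift Δt d) with hf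
  set term : Fin K → ℝ := fun l =>
    ηp * max (xb l + δv l * xr l) 0 - (1 / ηm) * max (-(xb l + δv l * xr l)) 0 - d l with hterm
  have hcell : ∀ (i : ℕ) (hiK : i < K), ∀ s ∈ Ioo ((i:ℝ)*Δt) (((i:ℝ)+1)*Δt),
      f s = term ⟨i, hiK⟩ := by
    intro i hiK s hs
    have e1 : lift Δt xb s = xb ⟨i, hiK⟩ := lift_eval hΔt xb ⟨i, hiK⟩ hs.1.le hs.2
    have e2 : lift Δt xr s = xr ⟨i, hiK⟩ := lift_eval hΔt xr ⟨i, hiK⟩ hs.1.le hs.2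
    have e3 : lift Δt δv s = δv ⟨i, hiK⟩ := lift_eval hΔt δv ⟨i, hiK⟩ hs.1.le hs.2
    have e4 : lift Δt d s = d ⟨i, hiK⟩ := lift_eval hΔt d ⟨i, hiK⟩ hs.1.le hs.2
    simp only [hf]; unfold socIntegrand
    rw [e1, e2, e3, e4]
  have hII : ∀ i : ℕ, i < k → IntervalIntegrable f volume ((i:ℝ)*Δt) (((i+1:ℕ):ℝ)*Δt) := by
    intro i hi
    have hiK : i < K := by omega
    apply intervalIntegrable_Ioo_const f (term ⟨i, hiK⟩) _ _ (by push_cast; nlinarith)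
    intro s hs
    apply hcell i hiK
    constructor
    · exact hs.1
    · push_cast at hs; exact_mod_cast hs.2
  have hadj := intervalIntegral.sum_integral_adjacent_intervals
    (a := fun i => ((i:ℕ):ℝ)*Δt) (n := k) (f := f) (μ := volume) ?_
  · have h0 : (((0:ℕ)):ℝ)*Δt = 0 := by norm_num
    rw [h0] at hadj
    rw [← hadj]
    rw [sum_fin_lt K k hk term, Finset.mul_sum]
    apply Finset.sum_congr rfl
    intro i hi
    simp only [Finset.mem_range] at hi
    have hiK : i < K := by omega
    rw [dif_pos hiK]
    rw [integral_Ioo_const f (term ⟨i, hiK⟩) _ _ (by push_cast; nlinarith)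
      (fun s hs => hcell i hiK s (by push_cast at hs ⊢; exact hs))]
    push_cast; ring
  · intro i hi
    exact hII i hi

end Realization

section Membership

variable {K : ℕ}

lemma lift_mem_Dset {Δt : ℝ} {W g : ℕ} (hΔt : 0 < Δt) (hg : 1 ≤ g) (hWK : W ≤ K)
    {T Γ γ : ℝ} (hT : T = K * Δt) (hΓ : Γ = W * Δt) (hγ : γ = g * Δt)
    (δv : Fin K → ℝ) (hδv : δv ∈ DK K W g) : lift Δt δv ∈ Dset T Γ γ := by
  have hΓ0 : 0 ≤ Γ := by rw [hΓ]; positivity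
  refine ⟨lift_measurable δv, ?_, ?_⟩
  · intro t _
    have := lift_abs_le_one (Δt := Δt) δv hδv.1 t
    constructor
    · linarith [abs_le.mp this |>.1]
    · linarith [abs_le.mp this |>.2]
  · intro t ht
    rw [hγ]
    apply lift_window_bound hΔt W g hg δv hδv.1 (DK_window_nat hg δv hδv)
      (le_max_right _ _) (max_le (by linarith [ht.2]) ht.1) (by rw [← hT]; exact ht.2)
    calc t - max (t - Γ) 0 ≤ t - (t - Γ) := by
          apply sub_le_sub_left (le_max_left _ _)
      _ = Γ := by ring
      _ = W * Δt := hΓ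

lemma socIntegrand_measurable {Δt ηp ηm : ℝ} (xb xr d : Fin K → ℝ) {δ : ℝ → ℝ}
    (hδ : Measurable δ) :
    Measurable (socIntegrand ηp ηm (lift Δt xb) (lift Δt xr) δ (lift Δt d)) := by
  have h1 : Measurable (fun s => lift Δt xb s + δ s * lift Δt xr s) :=
    (lift_measurable xb).add (hδ.mul (lift_measurable xr))
  unfold socIntegrand
  exact (((h1.max measurable_const).const_mul ηp).sub
    ((h1.neg.max measurable_const).const_mul (1/ηm))).sub (lift_measurable d)

lemma socIntegrand_bound {Δt ηp ηm : ℝ} (hp : 0 < ηp) (hm : 0 < ηm)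
    (xb xr d : Fin K → ℝ) {δ : ℝ → ℝ} {s : ℝ} (hδ1 : |δ s| ≤ 1) :
    |socIntegrand ηp ηm (lift Δt xb) (lift Δt xr) δ (lift Δt d) s|
      ≤ ηp * ((∑ l : Fin K, |xb l|) + ∑ l : Fin K, |xr l|)
        + (1/ηm) * ((∑ l : Fin K, |xb l|) + ∑ l : Fin K, |xr l|) + ∑ l : Fin K, |d l| := by
  set Sb := ∑ l : Fin K, |xb l| with hSb
  set Sr := ∑ l : Fin K, |xr l| with hSr
  set Sd := ∑ l : Fin K, |d l| with hSd
  set z := lift Δt xb s + δ s * lift Δt xr s with hz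
  have hzb : |z| ≤ Sb + Sr := by
    calc |z| ≤ |lift Δt xb s| + |δ s * lift Δt xr s| := abs_add_le _ _
      _ ≤ Sb + |δ s| * |lift Δt xr s| := by
          rw [abs_mul]
          exact add_le_add (lift_abs_le_sum xb s) (le_refl _)
      _ ≤ Sb + 1 * Sr := by
          apply add_le_add (le_refl _)
          apply mul_le_mul hδ1 (lift_abs_le_sum xr s) (abs_nonneg _) zero_le_one
      _ = Sb + Sr := by ring
  have hmax1 : |max z 0| ≤ |z| := by
    rw [abs_le]; constructor
    · linarith [le_max_right z 0, abs_nonneg z]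
    · exact max_le (le_abs_self z) (abs_nonneg z)
  have hmax2 : |max (-z) 0| ≤ |z| := by
    rw [abs_le]; constructor
    · linarith [le_max_right (-z) 0, abs_nonneg z]
    · exact max_le (neg_le_abs z) (abs_nonneg z)
  have hdb : |lift Δt d s| ≤ Sd := lift_abs_le_sum d s
  unfold socIntegrand
  rw [← hz]
  have e1 : |ηp * max z 0| ≤ ηp * (Sb + Sr) := by
    rw [abs_mul, abs_of_pos hp]
    exact mul_le_mul_of_nonneg_left (le_trans hmax1 hzb) hp.le
  have e2 : |(1/ηm) * max (-z) 0| ≤ (1/ηm) * (Sb + Sr) := by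
    rw [abs_mul, abs_of_pos (by positivity : (0:ℝ) < 1/ηm)]
    exact mul_le_mul_of_nonneg_left (le_trans hmax2 hzb) (by positivity)
  calc |ηp * max z 0 - (1/ηm) * max (-z) 0 - lift Δt d s|
      ≤ |ηp * max z 0 - (1/ηm) * max (-z) 0| + |lift Δt d s| := abs_sub _ _
    _ ≤ |ηp * max z 0| + |(1/ηm) * max (-z) 0| + |lift Δt d s| := by
        linarith [abs_sub (ηp * max z 0) ((1/ηm) * max (-z) 0)]
    _ ≤ ηp * (Sb + Sr) + (1/ηm) * (Sb + Sr) + Sd := by linarith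

end Membership

lemma sum_range_ite (K k : ℕ) (hk : k ≤ K) (X : ℕ → ℝ) :
    ∑ i ∈ Finset.range K, (if i < k then X i else 0) = ∑ i ∈ Finset.range k, X i := by
  rw [← Finset.sum_filter]
  congr 1
  ext i; simp; omega

section HardDirection

set_option maxHeartbeats 2000000

lemma hard_dir (Δt : ℝ) (K W g : ℕ) (hΔt : 0 < Δt)
    (hg : 0 < g) (hgW : g ≤ W) (hWK : W ≤ K)
    (T Γ γ : ℝ) (hT : T = K * Δt) (hΓ : Γ = W * Δt) (hγ : γ = g * Δt)
    (ηp ηm : ℝ) (hηp : ηp ∈ Ioc (0:ℝ) 1) (hηm : ηm ∈ Ioc (0:ℝ) 1)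
    (xb xr d : Fin K → ℝ)
    (hxb : ∀ l, 0 ≤ xb l) (hxr : ∀ l, 0 ≤ xr l)
    (y0 : ℝ) (δ : ℝ → ℝ) (hδ : δ ∈ Dset T Γ γ) (t : ℝ) (ht : t ∈ Icc (0:ℝ) T) :
    ∃ δv ∈ DK K W g, ∃ k ≤ K,
      ysoc Δt ηp ηm xb xr δv d y0 k
        ≤ soc ηp ηm (lift Δt xb) (lift Δt xr) δ (lift Δt d) y0 t := by
  obtain ⟨hδm, hδ1, hδw⟩ := hδ
  obtain ⟨ht0, htT⟩ := ht
  have hδabs : ∀ s ∈ Icc (0:ℝ) T, |δ s| ≤ 1 := by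
    intro s hs
    have := hδ1 s hs
    rw [abs_le]; exact ⟨this.1, this.2⟩
  -- integrand and its integrability
  set f := socIntegrand ηp ηm (lift Δt xb) (lift Δt xr) δ (lift Δt d) with hf
  have hfme : Measurable f := socIntegrand_measurable xb xr d hδm
  have hfII : ∀ x y : ℝ, 0 ≤ x → x ≤ y → y ≤ T → IntervalIntegrable f volume x y := by
    intro x y hx hxy hyT
    refine intervalIntegrable_of_bounded (C := ηp * ((∑ l : Fin K, |xb l|) + ∑ l : Fin K, |xr l|)
      + (1/ηm) * ((∑ l : Fin K, |xb l|) + ∑ l : Fin K, |xr l|) + ∑ l : Fin K, |d l|) hfme ?_ hxy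
    intro s hs
    exact socIntegrand_bound hηp.1 hηm.1 xb xr d
      (hδabs s ⟨le_trans hx hs.1, le_trans hs.2 hyT⟩)
  have hδII : ∀ x y : ℝ, 0 ≤ x → x ≤ y → y ≤ T → IntervalIntegrable (fun s => |δ s|) volume x y := by
    intro x y hx hxy hyT
    refine intervalIntegrable_of_bounded (C := 1) hδm.abs ?_ hxy
    intro s hs
    rw [abs_abs]
    exact hδabs s ⟨le_trans hx hs.1, le_trans hs.2 hyT⟩
  -- capped grid
  set c : ℕ → ℝ := fun i => min ((i:ℝ)*Δt) t with hc
  have hc0 : c 0 = 0 := by simp only [hc]; norm_num; exact ht0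
  have hcK : c K = t := by
    simp only [hc]
    exact min_eq_right (by rw [← hT]; exact htT)
  have hcmono : ∀ i j : ℕ, i ≤ j → c i ≤ c j := by
    intro i j hij
    apply min_le_min _ (le_refl t)
    apply mul_le_mul_of_nonneg_right _ hΔt.le
    exact_mod_cast hij
  have hcnn : ∀ i, 0 ≤ c i := by
    intro i; apply le_min (by positivity) ht0
  have hcle : ∀ i, c i ≤ t := fun i => min_le_right _ _
  have hcleT : ∀ i, c i ≤ T := fun i => le_trans (hcle i) htT
  have hclen : ∀ i, c (i+1) - c i ≤ Δt := by
    intro i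
    have h1 : c (i+1) ≤ (i:ℝ)*Δt + Δt := by
      calc c (i+1) ≤ (((i+1):ℕ):ℝ)*Δt := min_le_left _ _
        _ = (i:ℝ)*Δt + Δt := by push_cast; ring
    have h2 : c (i+1) ≤ t := hcle _
    rcases le_total ((i:ℝ)*Δt) t with h | h
    · have : c i = (i:ℝ)*Δt := min_eq_left h
      linarith
    · have : c i = t := min_eq_right h
      linarith
  -- the mass vector
  set ν : ℕ → ℝ := fun i => (∫ s in c i..c (i+1), |δ s|) / Δt with hν
  have hν0 : ∀ i, 0 ≤ ν i := by
    intro i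
    apply div_nonneg _ hΔt.le
    apply integral_nonneg_Ioo (hcmono i (i+1) (by omega))
      (hδII _ _ (hcnn i) (hcmono i (i+1) (by omega)) (hcleT (i+1)))
    intro s _; exact abs_nonneg _
  have hνlen : ∀ i, Δt * ν i ≤ c (i+1) - c i := by
    intro i
    have hle : c i ≤ c (i+1) := hcmono i (i+1) (by omega)
    have h1 : (∫ s in c i..c (i+1), |δ s|) ≤ ∫ s in c i..c (i+1), (1:ℝ) := by
      apply integral_mono_Ioo hle (hδII _ _ (hcnn i) hle (hcleT (i+1))) intervalIntegrable_const
      intro s hs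
      exact hδabs s ⟨le_trans (hcnn i) hs.1.le, le_trans hs.2.le (hcleT (i+1))⟩
    rw [intervalIntegral.integral_const, smul_eq_mul, mul_one] at h1
    have : Δt * ν i = ∫ s in c i..c (i+1), |δ s| := by
      simp only [hν]; field_simp
    linarith
  have hν1 : ∀ i, ν i ≤ 1 := by
    intro i
    have h1 := hνlen i
    have h2 := hclen i
    have := hν0 i
    nlinarith
  -- window sums
  have hwinν : ∀ p q : ℕ, q ≤ p + W → (∑ i ∈ Finset.Ico p q, ν i) ≤ (g:ℝ) := by
    intro p q hpq
    rcases le_or_gt q p with h | h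
    · rw [Finset.Ico_eq_empty (by omega)]
      simp
    have hsum : ∑ i ∈ Finset.Ico p q, (∫ s in c i..c (i+1), |δ s|)
        = ∫ s in c p..c q, |δ s| := by
      have hadj := intervalIntegral.sum_integral_adjacent_intervals
        (a := fun j => c (p + j)) (n := q - p) (f := fun s => |δ s|) (μ := volume) ?_
      · rw [show p + 0 = p by omega, show p + (q - p) = q by omega] at hadj
        rw [← hadj, Finset.sum_Ico_eq_sum_range]
        apply Finset.sum_congr rfl
        intro j _
        rw [show p + j + 1 = p + (j+1) by omega]
      · intro j _
        exact hδII _ _ (hcnn _) (hcmono _ _ (by omega)) (hcleT _)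
    have hbound : (∫ s in c p..c q, |δ s|) ≤ γ := by
      have hmax : max (c q - Γ) 0 ≤ c p := by
        apply max_le _ (hcnn p)
        simp only [hc]
        apply le_min
        · have : c q ≤ (q:ℝ)*Δt := min_le_left _ _
          have hq : (q:ℝ) ≤ (p:ℝ) + (W:ℝ) := by exact_mod_cast hpq
          rw [hΓ]
          nlinarith
        · have : c q ≤ t := hcle q
          rw [hΓ]
          have : (0:ℝ) ≤ (W:ℝ)*Δt := by positivity
          linarith
      have hsplit : (∫ s in (max (c q - Γ) 0)..(c p), |δ s|) + (∫ s in c p..c q, |δ s|)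
          = ∫ s in (max (c q - Γ) 0)..(c q), |δ s| := by
        apply intervalIntegral.integral_add_adjacent_intervals
        · exact hδII _ _ (le_max_right _ _) hmax (hcleT p)
        · exact hδII _ _ (hcnn p) (hcmono p q (by omega)) (hcleT q)
      have hpos : 0 ≤ ∫ s in (max (c q - Γ) 0)..(c p), |δ s| := by
        apply integral_nonneg_Ioo hmax (hδII _ _ (le_max_right _ _) hmax (hcleT p))
        intro s _; exact abs_nonneg _
      have hw := hδw (c q) ⟨hcnn q, hcleT q⟩
      linarith
    have : ∑ i ∈ Finset.Ico p q, ν i = (∫ s in c p..c q, |δ s|) / Δt := by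
      simp only [hν]
      rw [← hsum, Finset.sum_div]
    rw [this, hγ] at *
    rw [div_le_iff₀ hΔt]
    linarith
  -- the per-period rates
  set φ0 : ℕ → ℝ := fun i => if h : i < K then
    ηp * max (xb ⟨i,h⟩ + 0 * xr ⟨i,h⟩) 0 - (1/ηm) * max (-(xb ⟨i,h⟩ + 0 * xr ⟨i,h⟩)) 0 - d ⟨i,h⟩
    else 0 with hφ0
  set φm : ℕ → ℝ := fun i => if h : i < K then
    ηp * max (xb ⟨i,h⟩ + (-1) * xr ⟨i,h⟩) 0 - (1/ηm) * max (-(xb ⟨i,h⟩ + (-1) * xr ⟨i,h⟩)) 0 - d ⟨i,h⟩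
    else 0 with hφm
  clear_value φ0 φm
  -- per-cell chord lower bound
  have hcell : ∀ i : ℕ, i < K →
      (c (i+1) - c i) * φ0 i + (Δt * ν i) * (φm i - φ0 i) ≤ ∫ s in c i..c (i+1), f s := by
    intro i hiK
    have hle : c i ≤ c (i+1) := hcmono i (i+1) (by omega)
    rcases le_or_gt ((i:ℝ)*Δt) t with hit | hit
    · -- nondegenerate cell
      have hci : c i = (i:ℝ)*Δt := min_eq_left hit
      have hcip : c (i+1) ≤ ((i:ℝ)+1)*Δt := by
        simp only [hc]; push_cast; exact min_le_left _ _
      have hpoint : ∀ s ∈ Ioo (c i) (c (i+1)),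
          φ0 i + |δ s| * (φm i - φ0 i) ≤ f s := by
        intro s hs
        have hsc : (i:ℝ)*Δt ≤ s := by rw [← hci]; exact hs.1.le
        have hsc2 : s < ((i:ℝ)+1)*Δt := lt_of_lt_of_le hs.2 hcip
        have e1 : lift Δt xb s = xb ⟨i, hiK⟩ := lift_eval hΔt xb ⟨i, hiK⟩ hsc hsc2
        have e2 : lift Δt xr s = xr ⟨i, hiK⟩ := lift_eval hΔt xr ⟨i, hiK⟩ hsc hsc2
        have e3 : lift Δt d s = d ⟨i, hiK⟩ := lift_eval hΔt d ⟨i, hiK⟩ hsc hsc2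
        have hsT : s ∈ Icc (0:ℝ) T :=
          ⟨le_trans (hcnn i) hs.1.le, le_trans hs.2.le (hcleT (i+1))⟩
        have hch := chord ηp ηm (xb ⟨i, hiK⟩) (xr ⟨i, hiK⟩) (d ⟨i, hiK⟩) (δ s)
          hηp.1 hηp.2 hηm.1 hηm.2 (hxb _) (hxr _) (hδabs s hsT)
        have hfs : f s = ηp * max (xb ⟨i, hiK⟩ + δ s * xr ⟨i, hiK⟩) 0
            - (1/ηm) * max (-(xb ⟨i, hiK⟩ + δ s * xr ⟨i, hiK⟩)) 0 - d ⟨i, hiK⟩ := by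
          simp only [hf]; unfold socIntegrand; rw [e1, e2, e3]
        rw [hfs]
        simp only [hφ0, hφm, dif_pos hiK]
        nlinarith [hch]
      have hIg : IntervalIntegrable (fun s => φ0 i + |δ s| * (φm i - φ0 i)) volume (c i) (c (i+1)) :=
        intervalIntegrable_const.add ((hδII _ _ (hcnn i) hle (hcleT (i+1))).mul_const _)
      have hmono := integral_mono_Ioo hle hIg (hfII _ _ (hcnn i) hle (hcleT (i+1))) hpoint
      have hLHS : (∫ s in c i..c (i+1), (φ0 i + |δ s| * (φm i - φ0 i)))
          = (c (i+1) - c i) * φ0 i + (Δt * ν i) * (φm i - φ0 i) := by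
        rw [intervalIntegral.integral_add intervalIntegrable_const
          ((hδII _ _ (hcnn i) hle (hcleT (i+1))).mul_const _)]
        rw [intervalIntegral.integral_const, smul_eq_mul, intervalIntegral.integral_mul_const]
        have hM : Δt * ν i = ∫ s in c i..c (i+1), |δ s| := by
          simp only [hν]; field_simp
        rw [hM]
      rw [hLHS] at hmono
      exact hmono
    · -- degenerate cell beyond t
      have hci : c i = t := min_eq_right hit.le
      have hcip : c (i+1) = t := by
        apply min_eq_right
        push_cast
        nlinarith [hΔt.le]
      rw [hci, hcip]
      have hνz : ν i = 0 := by
        simp only [hν, hci, hcip]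
        simp
      rw [hνz]
      simp
  -- total decomposition of the integral
  have htotal : (∫ s in (0:ℝ)..t, f s) = ∑ i ∈ Finset.range K, ∫ s in c i..c (i+1), f s := by
    have hadj := intervalIntegral.sum_integral_adjacent_intervals
      (a := c) (n := K) (f := f) (μ := volume) ?_
    · rw [hc0, hcK] at hadj
      exact hadj.symm
    · intro i _
      exact hfII _ _ (hcnn i) (hcmono i (i+1) (by omega)) (hcleT (i+1))
  -- the index of the cell containing t
  set k0 : ℕ := min (⌊t/Δt⌋.toNat) K with hk0
  clear_value k0
  have hk0K : k0 ≤ K := by rw [hk0]; exact min_le_right _ _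
  have hck : ∀ i : ℕ, i ≤ k0 → c i = (i:ℝ)*Δt := by
    intro i hi
    apply min_eq_left
    have h1 : (i:ℤ) ≤ ⌊t/Δt⌋ := by
      have h2 : i ≤ ⌊t/Δt⌋.toNat := by
        rw [hk0] at hi
        exact le_trans hi (min_le_left _ _)
      have h0 : (0:ℤ) ≤ ⌊t/Δt⌋ := Int.floor_nonneg.mpr (div_nonneg ht0 hΔt.le)
      omega
    have h3 : (i:ℝ) ≤ t/Δt := le_trans (by exact_mod_cast h1) (Int.floor_le _)
    calc (i:ℝ)*Δt ≤ (t/Δt)*Δt := mul_le_mul_of_nonneg_right h3 hΔt.le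
      _ = t := by field_simp
  have hct : ∀ i : ℕ, k0 < i → c i = t := by
    intro i hi
    apply min_eq_right
    rcases le_total (⌊t/Δt⌋.toNat) K with hcase | hcase
    · have hk0eq : k0 = ⌊t/Δt⌋.toNat := by rw [hk0]; exact min_eq_left hcase
      have h1 : t/Δt < (k0:ℝ) + 1 := by
        rw [hk0eq]
        have h2 := Int.lt_floor_add_one (t/Δt)
        have h3 : ((⌊t/Δt⌋.toNat : ℤ):ℝ) = ((⌊t/Δt⌋:ℤ):ℝ) := by
          congr 1
          exact Int.toNat_of_nonneg (Int.floor_nonneg.mpr (by positivity))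
        push_cast at h3 ⊢
        rw [h3]; exact h2
      have h4 : (k0:ℝ) + 1 ≤ (i:ℝ) := by exact_mod_cast hi
      calc t = (t/Δt)*Δt := by field_simp
        _ ≤ (i:ℝ)*Δt := by nlinarith
    · have hk0eq : k0 = K := by rw [hk0]; exact min_eq_right hcase
      have h1 : (k0:ℝ) + 1 ≤ (i:ℝ) := by exact_mod_cast hi
      calc t ≤ T := htT
        _ = K * Δt := hT
        _ = (k0:ℝ) * Δt := by rw [hk0eq]
        _ ≤ (i:ℝ)*Δt := by nlinarith
  -- TU rounding
  set e : ℕ → ℝ := fun i => if i < k0 then Δt * (φm i - φ0 i)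
    else if i = k0 ∧ k0 < K then
      (if 0 < φ0 k0 then Δt * φm k0 else Δt * (φm k0 - φ0 k0)) else 0 with he
  clear_value e
  obtain ⟨E, hEsub, hEcard, hEval⟩ := TU_round K W g ν hν0 hν1 hwinν e
  classical
  set k : ℕ := if k0 = K then K
    else (if 0 < φ0 k0 then (if k0 ∈ E then k0 + 1 else k0) else k0 + 1) with hk
  clear_value k
  have hkK : k ≤ K := by
    rw [hk]; split_ifs with h1 h2 h3 <;> omega
  have hk0k : k0 ≤ k := by
    rw [hk]; split_ifs <;> omega
  have hkk01 : k ≤ k0 + 1 := by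
    rw [hk]; split_ifs <;> omega
  set δv : Fin K → ℝ := fun l => if (l:ℕ) ∈ E ∧ (l:ℕ) < k then -1 else 0 with hδvdef
  clear_value δv
  have hδvmem : δv ∈ DK K W g := by
    constructor
    · intro l
      simp only [hδvdef]
      split <;> simp
    · intro kk
      have habs : ∀ l : Fin K, |δv l|
          = (fun i : ℕ => if i ∈ E ∧ i < k then (1:ℝ) else 0) (l:ℕ) := by
        intro l
        simp only [hδvdef]
        split <;> simp
      calc (∑ l ∈ Finset.univ.filter
              (fun l : Fin K => (kk:ℕ) + 1 - W ≤ (l:ℕ) ∧ (l:ℕ) ≤ (kk:ℕ)), |δv l|)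
          = ∑ l ∈ Finset.univ.filter
              (fun l : Fin K => (kk:ℕ) + 1 - W ≤ (l:ℕ) ∧ (l:ℕ) ≤ (kk:ℕ)),
              (fun i : ℕ => if i ∈ E ∧ i < k then (1:ℝ) else 0) (l:ℕ) :=
            Finset.sum_congr rfl (fun l _ => habs l)
        _ = ∑ i ∈ Finset.Ico ((kk:ℕ) + 1 - W) ((kk:ℕ) + 1),
              (fun i : ℕ => if i ∈ E ∧ i < k then (1:ℝ) else 0) i :=
            sum_fin_win K ((kk:ℕ) + 1 - W) (kk:ℕ) kk.isLt
              (fun i : ℕ => if i ∈ E ∧ i < k then (1:ℝ) else 0)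
        _ ≤ ∑ i ∈ Finset.Ico ((kk:ℕ) + 1 - W) ((kk:ℕ) + 1), (if i ∈ E then (1:ℝ) else 0) := by
            apply Finset.sum_le_sum
            intro i _
            by_cases h2 : i ∈ E
            · rw [if_pos h2]
              split_ifs <;> norm_num
            · rw [if_neg h2, if_neg (by tauto)]
        _ = (((Finset.Ico ((kk:ℕ) + 1 - W) ((kk:ℕ) + 1)).filter (· ∈ E)).card : ℝ) := by
            rw [Finset.sum_boole]
        _ ≤ (g:ℝ) := hEcard _ _ (by omega)
  -- the formula for the discrete state of charge of the witness
  have hysoc : ysoc Δt ηp ηm xb xr δv d y0 k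
      = y0 + ∑ i ∈ Finset.range K,
          (if i < k then (if i ∈ E then Δt * φm i else Δt * φ0 i) else 0) := by
    unfold ysoc
    congr 1
    rw [sum_fin_lt K k hkK, Finset.mul_sum,
      sum_range_ite K k hkK (fun i => if i ∈ E then Δt * φm i else Δt * φ0 i)]
    apply Finset.sum_congr rfl
    intro i hi
    simp only [Finset.mem_range] at hi
    have hiK : i < K := by omega
    rw [dif_pos hiK]
    by_cases hiE : i ∈ E
    · rw [if_pos hiE]
      have : δv ⟨i, hiK⟩ = -1 := by
        simp only [hδvdef]
        rw [if_pos ⟨hiE, hi⟩]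
      rw [this]
      simp only [hφm, dif_pos hiK]
    · rw [if_neg hiE]
      have : δv ⟨i, hiK⟩ = 0 := by
        simp only [hδvdef]
        rw [if_neg (by tauto)]
      rw [this]
      simp only [hφ0, dif_pos hiK]
  -- the pointwise gap inequality
  have hgap : ∀ i ∈ Finset.range K,
      (if i < k then (if i ∈ E then Δt * φm i else Δt * φ0 i) else 0)
        - (if i ∈ E then e i else 0)
      ≤ ((c (i+1) - c i) * φ0 i + (Δt * ν i) * (φm i - φ0 i)) - ν i * e i := by
    intro i hi
    simp only [Finset.mem_range] at hi
    rcases lt_trichotomy i k0 with hik0 | hik0 | hik0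
    · -- i < k0
      have hik : i < k := by omega
      have hlen : c (i+1) - c i = Δt := by
        rw [hck i (by omega), hck (i+1) (by omega)]
        push_cast; ring
      have hei : e i = Δt * (φm i - φ0 i) := by
        simp only [he]; rw [if_pos hik0]
      rw [if_pos hik, hei, hlen]
      by_cases hiE : i ∈ E
      · rw [if_pos hiE, if_pos hiE]
        ring_nf
        linarith [le_refl (0:ℝ)]
      · rw [if_neg hiE, if_neg hiE]
        ring_nf
        linarith [le_refl (0:ℝ)]
    · -- i = k0
      subst hik0
      have hiK' : i < K := hi
      have hcc1 : c i = (i:ℝ)*Δt := hck i le_rfl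
      have hcc2 : c (i+1) = t := hct (i+1) (by omega)
      have hM1 : Δt * ν i ≤ t - (i:ℝ)*Δt := by
        have := hνlen i
        rw [hcc1, hcc2] at this
        linarith
      have hM0 : 0 ≤ Δt * ν i := mul_nonneg hΔt.le (hν0 i)
      have hτΔ : t - (i:ℝ)*Δt ≤ Δt := by
        have := hclen i
        rw [hcc1, hcc2] at this
        linarith
      have hkne : ¬ (i = K) := by omega
      have hei : e i = if 0 < φ0 i then Δt * φm i else Δt * (φm i - φ0 i) := by
        simp only [he]
        rw [if_neg (by omega)]
        simp [hiK']
      rw [hcc1, hcc2]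
      by_cases hpos : 0 < φ0 i <;> by_cases hiE : i ∈ E
      · have hkk : k = i + 1 := by
          simp only [hk]; rw [if_neg hkne, if_pos hpos, if_pos hiE]
        rw [hkk] at *
        rw [if_pos (by omega : i < i + 1), if_pos hiE, if_pos hiE, hei, if_pos hpos]
        nlinarith [mul_nonneg (by linarith : (0:ℝ) ≤ t - (i:ℝ)*Δt - Δt * ν i) hpos.le]
      · have hkk : k = i := by
          simp only [hk]; rw [if_neg hkne, if_pos hpos, if_neg hiE]
        rw [hkk] at *
        rw [if_neg (by omega : ¬ i < i), if_neg hiE, hei, if_pos hpos]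
        nlinarith [mul_nonneg (by linarith : (0:ℝ) ≤ t - (i:ℝ)*Δt - Δt * ν i) hpos.le]
      · have hkk : k = i + 1 := by
          simp only [hk]; rw [if_neg hkne, if_neg hpos]
        rw [hkk] at *
        rw [if_pos (by omega : i < i + 1), if_pos hiE, if_pos hiE, hei, if_neg hpos]
        push_neg at hpos
        nlinarith [mul_nonneg (by linarith : (0:ℝ) ≤ Δt - (t - (i:ℝ)*Δt)) (by linarith : (0:ℝ) ≤ -φ0 i)]
      · have hkk : k = i + 1 := by
          simp only [hk]; rw [if_neg hkne, if_neg hpos]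
        rw [hkk] at *
        rw [if_pos (by omega : i < i + 1), if_neg hiE, if_neg hiE, hei, if_neg hpos]
        push_neg at hpos
        nlinarith [mul_nonneg (by linarith : (0:ℝ) ≤ Δt - (t - (i:ℝ)*Δt)) (by linarith : (0:ℝ) ≤ -φ0 i)]
    · -- i > k0
      have hik : ¬ i < k := by omega
      have hcc1 : c i = t := hct i (by omega)
      have hcc2 : c (i+1) = t := hct (i+1) (by omega)
      have hνz : ν i = 0 := by
        simp only [hν]
        rw [hcc1, hcc2]
        simp
      have he0 : e i = 0 := by
        simp only [he]
        rw [if_neg (by omega), if_neg (by omega)]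
      rw [if_neg hik, he0, hνz, hcc1, hcc2]
      simp
  -- assemble
  refine ⟨δv, hδvmem, k, hkK, ?_⟩
  have hindE : ∑ i ∈ Finset.range K, (if i ∈ E then e i else 0) = ∑ i ∈ E, e i := by
    rw [← Finset.sum_filter]
    congr 1
    ext i
    simp only [Finset.mem_filter, Finset.mem_range]
    constructor
    · tauto
    · intro hiE
      exact ⟨Finset.mem_range.mp (hEsub hiE), hiE⟩
  have hchain : ∑ i ∈ Finset.range K,
      (if i < k then (if i ∈ E then Δt * φm i else Δt * φ0 i) else 0)
      ≤ ∑ i ∈ Finset.range K, ∫ s in c i..c (i+1), f s := by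
    have h1 : ∑ i ∈ Finset.range K,
        ((if i < k then (if i ∈ E then Δt * φm i else Δt * φ0 i) else 0)
          - (if i ∈ E then e i else 0))
        ≤ ∑ i ∈ Finset.range K,
          (((c (i+1) - c i) * φ0 i + (Δt * ν i) * (φm i - φ0 i)) - ν i * e i) :=
      Finset.sum_le_sum hgap
    rw [Finset.sum_sub_distrib, Finset.sum_sub_distrib, hindE] at h1
    have h2 : ∑ i ∈ Finset.range K,
        ((c (i+1) - c i) * φ0 i + (Δt * ν i) * (φm i - φ0 i))
        ≤ ∑ i ∈ Finset.range K, ∫ s in c i..c (i+1), f s := by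
      apply Finset.sum_le_sum
      intro i hi
      exact hcell i (Finset.mem_range.mp hi)
    linarith [hEval]
  rw [hysoc]
  unfold soc
  rw [← hf, htotal]
  linarith [hchain]

end HardDirection

section MainAssembly

variable {K : ℕ}

lemma DK_zero (K W g : ℕ) : (fun _ : Fin K => (0:ℝ)) ∈ DK K W g := by
  constructor
  · intro l; simp
  · intro k; simp

lemma ysoc_lb (Δt ηp ηm : ℝ) (hΔt : 0 < Δt) (hp : 0 < ηp) (hm : 0 < ηm)
    (xb xr δv d : Fin K → ℝ) (hxb : ∀ l, 0 ≤ xb l) (hxr : ∀ l, 0 ≤ xr l)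
    (hd : ∀ l, 0 ≤ d l) (hδv : ∀ l, |δv l| ≤ 1) (y0 : ℝ) (k : ℕ) :
    y0 - Δt * ∑ l : Fin K, ((1/ηm) * (xb l + xr l) + d l)
      ≤ ysoc Δt ηp ηm xb xr δv d y0 k := by
  unfold ysoc
  have hterm : ∀ l : Fin K,
      -((1/ηm) * (xb l + xr l) + d l)
        ≤ ηp * max (xb l + δv l * xr l) 0 - (1/ηm) * max (-(xb l + δv l * xr l)) 0 - d l := by
    intro l
    have h1 : 0 ≤ ηp * max (xb l + δv l * xr l) 0 :=
      mul_nonneg hp.le (le_max_right _ _)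
    have h2 : max (-(xb l + δv l * xr l)) 0 ≤ xb l + xr l := by
      apply max_le _ (by linarith [hxb l, hxr l])
      have h3 : |δv l * xr l| ≤ xr l := by
        rw [abs_mul, abs_of_nonneg (hxr l)]
        nlinarith [hδv l, abs_nonneg (δv l), hxr l]
      have := abs_le.mp h3
      linarith [hxb l]
    have h4 : (1/ηm) * max (-(xb l + δv l * xr l)) 0 ≤ (1/ηm) * (xb l + xr l) :=
      mul_le_mul_of_nonneg_left h2 (by positivity)
    linarith
  have hsum : ∑ l ∈ Finset.univ.filter (fun l : Fin K => (l:ℕ) < k),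
      (-((1/ηm) * (xb l + xr l) + d l))
      ≤ ∑ l ∈ Finset.univ.filter (fun l : Fin K => (l:ℕ) < k),
        (ηp * max (xb l + δv l * xr l) 0 - (1/ηm) * max (-(xb l + δv l * xr l)) 0 - d l) :=
    Finset.sum_le_sum (fun l _ => hterm l)
  have hsum2 : -(∑ l : Fin K, ((1/ηm) * (xb l + xr l) + d l))
      ≤ ∑ l ∈ Finset.univ.filter (fun l : Fin K => (l:ℕ) < k),
        (-((1/ηm) * (xb l + xr l) + d l)) := by
    have hmono : ∑ l ∈ Finset.univ.filter (fun l : Fin K => (l:ℕ) < k),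
        ((1/ηm) * (xb l + xr l) + d l) ≤ ∑ l : Fin K, ((1/ηm) * (xb l + xr l) + d l) := by
      apply Finset.sum_le_sum_of_subset_of_nonneg (Finset.filter_subset _ _)
      intro l _ _
      have h1 := hxb l; have h2 := hxr l; have h3 := hd l
      have : (0:ℝ) ≤ (1/ηm) * (xb l + xr l) := by positivity
      linarith
    rw [Finset.sum_neg_distrib]
    linarith
  have hfin : -(∑ l : Fin K, ((1/ηm) * (xb l + xr l) + d l))
      ≤ ∑ l ∈ Finset.univ.filter (fun l : Fin K => (l:ℕ) < k),
        (ηp * max (xb l + δv l * xr l) 0 - (1/ηm) * max (-(xb l + δv l * xr l)) 0 - d l) :=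
    le_trans hsum2 hsum
  nlinarith [hfin, hΔt.le]

end MainAssembly


/-- Proposition 7: the continuous robust lower bound on the
state-of-charge is equivalent to its discrete counterpart, and the worst-case
infima coincide. -/
theorem stmt_9 (Δt : ℝ) (K W g : ℕ) (hΔt : 0 < Δt)
    (hg : 0 < g) (hgW : g ≤ W) (hWK : W ≤ K)
    (T Γ γ : ℝ) (hT : T = K * Δt) (hΓ : Γ = W * Δt) (hγ : γ = g * Δt)
    (ηp ηm : ℝ) (hηp : ηp ∈ Ioc (0:ℝ) 1) (hηm : ηm ∈ Ioc (0:ℝ) 1)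
    (xb xr d : Fin K → ℝ)
    (hxb : ∀ l, 0 ≤ xb l) (hxr : ∀ l, 0 ≤ xr l) (hd : ∀ l, 0 ≤ d l)
    (hdx : ∀ l, d l = 0 ∨ (xb l = 0 ∧ xr l = 0))
    (y0 ylo : ℝ) :
    ((∀ δ ∈ Dset T Γ γ, ∀ t ∈ Icc (0:ℝ) T,
        ylo ≤ soc ηp ηm (lift Δt xb) (lift Δt xr) δ (lift Δt d) y0 t) ↔
      (∀ δv ∈ DK K W g, ∀ k ≤ K, ylo ≤ ysoc Δt ηp ηm xb xr δv d y0 k)) ∧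
    sInf {v : ℝ | ∃ δ ∈ Dset T Γ γ, ∃ t ∈ Icc (0:ℝ) T,
        v = soc ηp ηm (lift Δt xb) (lift Δt xr) δ (lift Δt d) y0 t} =
      sInf {v : ℝ | ∃ δv ∈ DK K W g, ∃ k ≤ K, v = ysoc Δt ηp ηm xb xr δv d y0 k} := by

  have hg1 : 1 ≤ g := hg
  have hmem : ∀ δv ∈ DK K W g, lift Δt δv ∈ Dset T Γ γ := fun δv hδv =>
    lift_mem_Dset hΔt hg1 hWK hT hΓ hγ δv hδv
  have hIcc : ∀ k : ℕ, k ≤ K → ((k:ℝ)*Δt) ∈ Icc (0:ℝ) T := by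
    intro k hk
    constructor
    · positivity
    · rw [hT]
      have : (k:ℝ) ≤ (K:ℝ) := by exact_mod_cast hk
      nlinarith
  have hgrid : ∀ δv ∈ DK K W g, ∀ k ≤ K,
      soc ηp ηm (lift Δt xb) (lift Δt xr) (lift Δt δv) (lift Δt d) y0 ((k:ℝ)*Δt)
        = ysoc Δt ηp ηm xb xr δv d y0 k := fun δv _ k hk =>
    soc_lift_grid hΔt ηp ηm xb xr d δv y0 k hk
  have hhard : ∀ δ ∈ Dset T Γ γ, ∀ t ∈ Icc (0:ℝ) T, ∃ δv ∈ DK K W g, ∃ k ≤ K,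
      ysoc Δt ηp ηm xb xr δv d y0 k
        ≤ soc ηp ηm (lift Δt xb) (lift Δt xr) δ (lift Δt d) y0 t := fun δ hδ t ht =>
    hard_dir Δt K W g hΔt hg hgW hWK T Γ γ hT hΓ hγ ηp ηm hηp hηm xb xr d hxb hxr y0 δ hδ t ht
  constructor
  · constructor
    · intro h δv hδv k hk
      have := h _ (hmem δv hδv) _ (hIcc k hk)
      rwa [hgrid δv hδv k hk] at this
    · intro h δ hδ t ht
      obtain ⟨δv, hδv, k, hk, hle⟩ := hhard δ hδ t ht
      exact le_trans (h δv hδv k hk) hle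
  · set S1 := {v : ℝ | ∃ δ ∈ Dset T Γ γ, ∃ t ∈ Icc (0:ℝ) T,
        v = soc ηp ηm (lift Δt xb) (lift Δt xr) δ (lift Δt d) y0 t} with hS1
    set S2 := {v : ℝ | ∃ δv ∈ DK K W g, ∃ k ≤ K, v = ysoc Δt ηp ηm xb xr δv d y0 k} with hS2
    set LB := y0 - Δt * ∑ l : Fin K, ((1/ηm) * (xb l + xr l) + d l) with hLB
    have hS2lb : ∀ v ∈ S2, LB ≤ v := by
      rintro v ⟨δv, hδv, k, hk, rfl⟩
      exact ysoc_lb Δt ηp ηm hΔt hηp.1 hηm.1 xb xr δv d hxb hxr hd hδv.1 y0 k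
    have hS2ne : S2.Nonempty :=
      ⟨ysoc Δt ηp ηm xb xr (fun _ => 0) d y0 0,
        ⟨fun _ => 0, DK_zero K W g, 0, by omega, rfl⟩⟩
    have hsub : S2 ⊆ S1 := by
      rintro v ⟨δv, hδv, k, hk, rfl⟩
      exact ⟨lift Δt δv, hmem δv hδv, (k:ℝ)*Δt, hIcc k hk, (hgrid δv hδv k hk).symm⟩
    have hS1ge : ∀ v ∈ S1, ∃ w ∈ S2, w ≤ v := by
      rintro v ⟨δ, hδ, t, ht, rfl⟩
      obtain ⟨δv, hδv, k, hk, hle⟩ := hhard δ hδ t ht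
      exact ⟨ysoc Δt ηp ηm xb xr δv d y0 k, ⟨δv, hδv, k, hk, rfl⟩, hle⟩
    have hS1lb : ∀ v ∈ S1, LB ≤ v := by
      intro v hv
      obtain ⟨w, hw, hwv⟩ := hS1ge v hv
      exact le_trans (hS2lb w hw) hwv
    apply le_antisymm
    · exact csInf_le_csInf ⟨LB, hS1lb⟩ hS2ne hsub
    · apply le_csInf (hS2ne.mono hsub)
      intro v hv
      obtain ⟨w, hw, hwv⟩ := hS1ge v hv
      exact le_trans (csInf_le ⟨LB, hS2lb⟩ hw) hwv
end
end

section
/- Let T > 0, 0 < γ ≤ Γ ≤ T, Δt > 0 with K = T/Δt a positive integer and γ/Δt, Γ/Δt positive integers. Let f : ℝ × [0,T] → ℝ be such that for every t, the map z ↦ f(z,t) is concave, continuous and nonincreasing, and for every z, the map t ↦ f(z,t) is constant on each trading interval [(k−1)Δt, kΔt), k ∈ {1,…,K}. Then for every t ∈ [0,T], inf_{δ ∈ D⁺} ∫₀ᵗ f(δ(s), s) ds = inf_{δ ∈ D⁺, δ(s) ∈ {0,1} for all s} ∫₀ᵗ f(δ(s), s) ds, i.e. the infimum over D⁺ equals the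 infimum over the {0,1}-valued elements of D⁺. -/
open MeasureTheory Set

noncomputable section

open intervalIntegral
open scoped Interval


lemma ae_ne_real (c : ℝ) : ∀ᵐ s : ℝ, s ≠ c := by
  refine ae_iff.mpr ?_
  simpa using Real.volume_singleton

/-- measurable + bounded on `ℝ` intervals ⟹ interval integrable -/
lemma ii_of_bdd {h : ℝ → ℝ} {a b C : ℝ} (hm : AEStronglyMeasurable h (volume.restrict (Ι a b)))
    (hC : ∀ s ∈ Ι a b, |h s| ≤ C) : IntervalIntegrable h volume a b := by
  refine IntervalIntegrable.mono_fun' (g := fun _ => C) (intervalIntegrable_const (c := C)) hm ?_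
  refine (ae_restrict_iff' measurableSet_uIoc).2 (Filter.Eventually.of_forall ?_)
  intro s hs; simpa [Real.norm_eq_abs] using hC s hs

lemma meas_ite_lt (c : ℝ) : Measurable (fun s : ℝ => if s < c then (1:ℝ) else 0) :=
  Measurable.ite measurableSet_Iio measurable_const measurable_const

lemma ii_ite_lt (c a b : ℝ) : IntervalIntegrable (fun s : ℝ => if s < c then (1:ℝ) else 0) volume a b := by
  refine ii_of_bdd ((meas_ite_lt c).aestronglyMeasurable) (C := 1) ?_
  intro s _; split <;> simp

lemma integral_ite_lt {a b : ℝ} (c : ℝ) (hab : a ≤ b) :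
    (∫ s in a..b, if s < c then (1:ℝ) else 0) = min b c - min a c := by
  rcases le_or_gt c a with h | h
  · rw [intervalIntegral.integral_congr (g := fun _ => (0:ℝ))]
    · simp [min_eq_right (h.trans hab), min_eq_right h]
    · intro s hs
      rw [uIcc_of_le hab] at hs
      simp [not_lt.2 (h.trans hs.1)]
  · have key : ∀ x y : ℝ, x ≤ y → y ≤ c → (∫ s in x..y, if s < c then (1:ℝ) else 0) = y - x := by
      intro x y hxy hyc
      rw [intervalIntegral.integral_congr_ae (g := fun _ => (1:ℝ))]
      · simp
      · filter_upwards [ae_ne_real c] with s hs hmem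
        rw [uIoc_of_le hxy] at hmem
        simp [lt_of_le_of_ne (hmem.2.trans hyc) hs]
    rcases le_or_gt b c with h2 | h2
    · rw [key a b hab h2, min_eq_left h2, min_eq_left h.le]
    · have split : (∫ s in a..b, if s < c then (1:ℝ) else 0) =
          (∫ s in a..c, if s < c then (1:ℝ) else 0) + ∫ s in c..b, if s < c then (1:ℝ) else 0 :=
        (intervalIntegral.integral_add_adjacent_intervals (ii_ite_lt c a c) (ii_ite_lt c c b)).symm
      have hzero : (∫ s in c..b, if s < c then (1:ℝ) else 0) = 0 := by
        rw [intervalIntegral.integral_congr (g := fun _ => (0:ℝ))]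
        · simp
        · intro s hs
          rw [uIcc_of_le h2.le] at hs
          simp [not_lt.2 hs.1]
      rw [split, key a c h.le le_rfl, hzero, min_eq_right h2.le, min_eq_left h.le]
      ring

section
variable {Δt T : ℝ} {δ : ℝ → ℝ}

/-- average-mass of `δ` on the `n`-th cell -/
noncomputable def cellM (Δt : ℝ) (δ : ℝ → ℝ) (n : ℤ) : ℝ :=
  ∫ s in ((n:ℝ)*Δt)..((n:ℝ)*Δt + Δt), δ s

/-- the left-packed bang-bang rearrangement of `δ` -/
noncomputable def bang (Δt T : ℝ) (δ : ℝ → ℝ) : ℝ → ℝ := fun s =>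
  if 0 ≤ s ∧ s < T ∧ s < (⌊s/Δt⌋:ℝ)*Δt + cellM Δt δ ⌊s/Δt⌋ then 1 else 0

lemma bang_mem01 (s : ℝ) : bang Δt T δ s = 0 ∨ bang Δt T δ s = 1 := by
  unfold bang; split <;> simp

lemma bang_nonneg (s : ℝ) : 0 ≤ bang Δt T δ s := by
  unfold bang; split <;> norm_num

lemma bang_le_one (s : ℝ) : bang Δt T δ s ≤ 1 := by
  unfold bang; split <;> norm_num

lemma abs_bang (s : ℝ) : |bang Δt T δ s| = bang Δt T δ s :=
  abs_of_nonneg (bang_nonneg s)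

lemma bang_measurable : Measurable (bang Δt T δ) := by
  have hfl : Measurable fun s : ℝ => ⌊s / Δt⌋ := (measurable_id.div_const Δt).floor
  have hF : Measurable fun s : ℝ => (⌊s/Δt⌋:ℝ)*Δt + cellM Δt δ ⌊s/Δt⌋ :=
    (measurable_from_top (f := fun n : ℤ => (n:ℝ)*Δt + cellM Δt δ n)).comp hfl
  have hset : MeasurableSet {s : ℝ | 0 ≤ s ∧ s < T ∧ s < (⌊s/Δt⌋:ℝ)*Δt + cellM Δt δ ⌊s/Δt⌋} := by
    refine measurableSet_Ici.inter (measurableSet_Iio.inter ?_)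
    exact measurableSet_lt measurable_id hF
  exact Measurable.ite hset measurable_const measurable_const

lemma ii_bang (a b : ℝ) : IntervalIntegrable (bang Δt T δ) volume a b := by
  refine ii_of_bdd (bang_measurable.aestronglyMeasurable) (C := 1) ?_
  intro s _; rw [abs_bang]; exact bang_le_one s

lemma floor_cell (hΔt : 0 < Δt) {n : ℕ} {s : ℝ}
    (hs : s ∈ Ico ((n:ℝ)*Δt) ((n:ℝ)*Δt + Δt)) : ⌊s / Δt⌋ = (n:ℤ) := by
  rw [Int.floor_eq_iff]
  constructor
  · push_cast; rw [le_div_iff₀ hΔt]; exact hs.1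
  · push_cast
    rw [div_lt_iff₀ hΔt]
    calc s < (n:ℝ)*Δt + Δt := hs.2
    _ = ((n:ℝ)+1)*Δt := by ring
  
lemma bang_cell (hΔt : 0 < Δt) {n : ℕ} (hnT : (n:ℝ)*Δt + Δt ≤ T) {s : ℝ}
    (hs : s ∈ Ico ((n:ℝ)*Δt) ((n:ℝ)*Δt + Δt)) :
    bang Δt T δ s = if s < (n:ℝ)*Δt + cellM Δt δ n then 1 else 0 := by
  have h0 : (0:ℝ) ≤ (n:ℝ)*Δt := by positivity
  have hfl := floor_cell hΔt hs
  unfold bang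
  rw [hfl]
  push_cast
  have h1 : 0 ≤ s := h0.trans hs.1
  have h2 : s < T := hs.2.trans_le hnT
  simp [h1, h2]

lemma integral_bang_cell (hΔt : 0 < Δt) {n : ℕ} (hnT : (n:ℝ)*Δt + Δt ≤ T) {a b : ℝ}
    (ha : (n:ℝ)*Δt ≤ a) (hab : a ≤ b) (hb : b ≤ (n:ℝ)*Δt + Δt) :
    (∫ s in a..b, bang Δt T δ s)
      = min b ((n:ℝ)*Δt + cellM Δt δ n) - min a ((n:ℝ)*Δt + cellM Δt δ n) := by
  rw [← integral_ite_lt ((n:ℝ)*Δt + cellM Δt δ n) hab]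
  refine intervalIntegral.integral_congr_ae ?_
  filter_upwards [ae_ne_real ((n:ℝ)*Δt + Δt)] with s hne hmem
  rw [uIoc_of_le hab] at hmem
  exact bang_cell hΔt hnT ⟨ha.trans hmem.1.le, lt_of_le_of_ne (hmem.2.trans hb) hne⟩

end
section
variable {Δt T : ℝ} {K : ℕ} {δ : ℝ → ℝ}

lemma exists_cell (hΔt : 0 < Δt) {t : ℝ} (h0 : 0 < t) (hK : t ≤ (K:ℝ)*Δt) :
    ∃ n : ℕ, n < K ∧ (n:ℝ)*Δt < t ∧ t ≤ (n:ℝ)*Δt + Δt := by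
  set m : ℤ := ⌈t/Δt⌉ with hm
  have hm1 : 1 ≤ m := Int.ceil_pos.mpr (div_pos h0 hΔt)
  have hmn : ((m - 1).toNat : ℤ) = m - 1 := Int.toNat_of_nonneg (by omega)
  refine ⟨(m-1).toNat, ?_, ?_, ?_⟩
  · have hmK : m ≤ (K:ℤ) := Int.ceil_le.mpr (by push_cast; rw [div_le_iff₀ hΔt]; exact hK)
    omega
  · have h := Int.ceil_lt_add_one (t/Δt)
    have : ((m:ℝ) - 1) * Δt < t := by
      rw [sub_mul, one_mul]
      have : (m:ℝ) < t/Δt + 1 := h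
      nlinarith [mul_lt_mul_of_pos_right this hΔt, (div_mul_cancel₀ t hΔt.ne')]
    calc ((((m-1).toNat):ℝ))*Δt = ((m:ℝ)-1)*Δt := by
          rw [← Int.cast_natCast, hmn]; push_cast; ring
    _ < t := this
  · have h := Int.le_ceil (t/Δt)
    have ht : t ≤ (m:ℝ) * Δt := by
      rw [← div_le_iff₀ hΔt]; exact h
    calc t ≤ (m:ℝ)*Δt := ht
    _ = ((((m-1).toNat):ℝ))*Δt + Δt := by rw [← Int.cast_natCast, hmn]; push_cast; ring

variable (hΔt : 0 < Δt) (hδm : Measurable δ)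
  (hδ01 : ∀ s ∈ Icc (0:ℝ) T, δ s ∈ Icc (0:ℝ) 1)

include hδm hδ01 in
lemma ii_delta {a b : ℝ} (h0 : 0 ≤ a) (hab : a ≤ b) (hbT : b ≤ T) :
    IntervalIntegrable δ volume a b := by
  refine ii_of_bdd (hδm.aestronglyMeasurable) (C := 1) ?_
  intro s hs
  rw [uIoc_of_le hab] at hs
  have := hδ01 s ⟨h0.trans hs.1.le, hs.2.trans hbT⟩
  rw [abs_le]; constructor <;> [linarith [this.1]; exact this.2]

include hδm hδ01 in
lemma delta_int_mono {a b a' b' : ℝ} (h0 : 0 ≤ a') (ha : a' ≤ a) (hab : a ≤ b) (hb : b ≤ b')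
    (hbT : b' ≤ T) : (∫ s in a..b, δ s) ≤ ∫ s in a'..b', δ s := by
  have hδnn : ∀ s ∈ Icc a' b', 0 ≤ δ s := fun s hs =>
    (hδ01 s ⟨h0.trans hs.1, hs.2.trans hbT⟩).1
  have i1 : IntervalIntegrable δ volume a' a := ii_delta hδm hδ01 h0 ha (by linarith)
  have i2 : IntervalIntegrable δ volume a b := ii_delta hδm hδ01 (h0.trans ha) hab (by linarith)
  have i3 : IntervalIntegrable δ volume b b' := ii_delta hδm hδ01 (by linarith) hb hbT
  have e1 := intervalIntegral.integral_add_adjacent_intervals i1 i2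
  have e2 := intervalIntegral.integral_add_adjacent_intervals (i1.trans i2) i3
  have p1 : 0 ≤ ∫ s in a'..a, δ s :=
    intervalIntegral.integral_nonneg ha (fun s hs => hδnn s ⟨hs.1, le_trans hs.2 (by linarith)⟩)
  have p3 : 0 ≤ ∫ s in b..b', δ s :=
    intervalIntegral.integral_nonneg hb (fun s hs => hδnn s ⟨le_trans (by linarith) hs.1, hs.2⟩)
  linarith

include hδm hδ01 in
lemma delta_int_le_len {a b : ℝ} (h0 : 0 ≤ a) (hab : a ≤ b) (hbT : b ≤ T) :
    (∫ s in a..b, δ s) ≤ b - a := by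
  have := intervalIntegral.integral_mono_on (μ := volume) (f := δ) (g := fun _ => (1:ℝ)) hab
    (ii_delta hδm hδ01 h0 hab hbT) (intervalIntegrable_const (c := (1:ℝ)))
    (fun s hs => (hδ01 s ⟨h0.trans hs.1, hs.2.trans hbT⟩).2)
  simpa using this

include hδm hδ01 in
lemma delta_int_nonneg {a b : ℝ} (h0 : 0 ≤ a) (hab : a ≤ b) (hbT : b ≤ T) :
    0 ≤ ∫ s in a..b, δ s :=
  intervalIntegral.integral_nonneg hab (fun s hs => (hδ01 s ⟨h0.trans hs.1, hs.2.trans hbT⟩).1)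

include hδm hδ01 in
lemma cellM_nonneg {n : ℕ} (hnT : (n:ℝ)*Δt + Δt ≤ T) (hΔt : 0 < Δt) :
    0 ≤ cellM Δt δ n := by
  have h0 : (0:ℝ) ≤ (n:ℝ)*Δt := by positivity
  exact delta_int_nonneg hδm hδ01 h0 (by linarith) hnT

include hδm hδ01 in
lemma cellM_le {n : ℕ} (hnT : (n:ℝ)*Δt + Δt ≤ T) (hΔt : 0 < Δt) :
    cellM Δt δ n ≤ Δt := by
  have h0 : (0:ℝ) ≤ (n:ℝ)*Δt := by positivity
  have := delta_int_le_len hδm hδ01 h0 (le_add_of_nonneg_right hΔt.le) hnT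
  simpa [cellM] using this

include hδm hδ01 in
lemma delta_int_le_min {n : ℕ} (hnT : (n:ℝ)*Δt + Δt ≤ T) (hΔt : 0 < Δt) {b : ℝ}
    (hb1 : (n:ℝ)*Δt ≤ b) (hb2 : b ≤ (n:ℝ)*Δt + Δt) :
    (∫ s in ((n:ℝ)*Δt)..b, δ s) ≤ min (b - (n:ℝ)*Δt) (cellM Δt δ n) := by
  have h0 : (0:ℝ) ≤ (n:ℝ)*Δt := by positivity
  refine le_min (delta_int_le_len hδm hδ01 h0 hb1 (hb2.trans hnT)) ?_
  exact delta_int_mono hδm hδ01 h0 le_rfl hb1 hb2 hnT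

include hδm hδ01 in
lemma abs_delta_int {a b : ℝ} (h0 : 0 ≤ a) (hab : a ≤ b) (hbT : b ≤ T) :
    (∫ s in a..b, |δ s|) = ∫ s in a..b, δ s := by
  refine intervalIntegral.integral_congr (fun s hs => ?_)
  rw [uIcc_of_le hab] at hs
  exact abs_of_nonneg (hδ01 s ⟨h0.trans hs.1, hs.2.trans hbT⟩).1

end
section
variable {Δt T : ℝ} {K : ℕ} {δ : ℝ → ℝ}
variable (hΔt : 0 < Δt) (hδm : Measurable δ)
  (hδ01 : ∀ s ∈ Icc (0:ℝ) T, δ s ∈ Icc (0:ℝ) 1)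

include hΔt hδm hδ01 in
lemma Phi_grid (hT : T = (K:ℝ)*Δt) :
    ∀ n : ℕ, n ≤ K → (∫ s in (0:ℝ)..((n:ℝ)*Δt), bang Δt T δ s) = ∫ s in (0:ℝ)..((n:ℝ)*Δt), δ s := by
  intro n hn
  induction n with
  | zero => simp
  | succ n ih =>
    have hnK : n ≤ K := le_of_lt (Nat.lt_of_succ_le hn)
    have hnT : (n:ℝ)*Δt + Δt ≤ T := by
      rw [hT]
      have : ((n:ℝ)+1) ≤ (K:ℝ) := by exact_mod_cast hn
      nlinarith
    have h0 : (0:ℝ) ≤ (n:ℝ)*Δt := by positivity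
    have hMn0 : 0 ≤ cellM Δt δ n := cellM_nonneg hδm hδ01 hnT hΔt
    have hMnΔ : cellM Δt δ n ≤ Δt := cellM_le hδm hδ01 hnT hΔt
    have hcast : ((n+1:ℕ):ℝ)*Δt = (n:ℝ)*Δt + Δt := by push_cast; ring
    rw [hcast]
    have e1 : (∫ s in (0:ℝ)..((n:ℝ)*Δt + Δt), bang Δt T δ s)
        = (∫ s in (0:ℝ)..((n:ℝ)*Δt), bang Δt T δ s) + ∫ s in ((n:ℝ)*Δt)..((n:ℝ)*Δt + Δt), bang Δt T δ s :=
      (intervalIntegral.integral_add_adjacent_intervals (ii_bang _ _) (ii_bang _ _)).symm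
    have e2 : (∫ s in (0:ℝ)..((n:ℝ)*Δt + Δt), δ s)
        = (∫ s in (0:ℝ)..((n:ℝ)*Δt), δ s) + cellM Δt δ n :=
      (intervalIntegral.integral_add_adjacent_intervals
        (ii_delta hδm hδ01 le_rfl h0 ((le_add_of_nonneg_right hΔt.le).trans hnT))
        (ii_delta hδm hδ01 h0 (le_add_of_nonneg_right hΔt.le) hnT)).symm
    have e3 : (∫ s in ((n:ℝ)*Δt)..((n:ℝ)*Δt + Δt), bang Δt T δ s) = cellM Δt δ n := by
      rw [integral_bang_cell hΔt hnT le_rfl (le_add_of_nonneg_right hΔt.le) le_rfl]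
      rw [min_eq_right (show (n:ℝ)*Δt + cellM Δt δ n ≤ (n:ℝ)*Δt + Δt by linarith),
          min_eq_left (show (n:ℝ)*Δt ≤ (n:ℝ)*Δt + cellM Δt δ n by linarith)]
      ring
    rw [e1, e2, e3, ih hnK]

include hΔt hδm hδ01 in
lemma Phi_cell {n : ℕ} (hnT : (n:ℝ)*Δt + Δt ≤ T) {t : ℝ}
    (ht1 : (n:ℝ)*Δt ≤ t) (ht2 : t ≤ (n:ℝ)*Δt + Δt) :
    (∫ s in (0:ℝ)..t, bang Δt T δ s)
      = (∫ s in (0:ℝ)..((n:ℝ)*Δt), bang Δt T δ s) + min (t - (n:ℝ)*Δt) (cellM Δt δ n) := by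
  have hM0 : 0 ≤ cellM Δt δ n := cellM_nonneg hδm hδ01 hnT hΔt
  have e1 : (∫ s in (0:ℝ)..t, bang Δt T δ s)
      = (∫ s in (0:ℝ)..((n:ℝ)*Δt), bang Δt T δ s) + ∫ s in ((n:ℝ)*Δt)..t, bang Δt T δ s :=
    (intervalIntegral.integral_add_adjacent_intervals (ii_bang _ _) (ii_bang _ _)).symm
  rw [e1, integral_bang_cell hΔt hnT le_rfl ht1 ht2,
      min_eq_left (show (n:ℝ)*Δt ≤ (n:ℝ)*Δt + cellM Δt δ n by linarith)]
  congr 1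
  rcases le_total t ((n:ℝ)*Δt + cellM Δt δ n) with h | h
  · rw [min_eq_left h, min_eq_left (by linarith)]
  · rw [min_eq_right h, min_eq_right (by linarith)]
    ring

end
section
variable {Δt T Γ γ : ℝ} {K W g : ℕ} {δ : ℝ → ℝ}

lemma cellM_nat (Δt : ℝ) (δ : ℝ → ℝ) (n : ℕ) :
    cellM Δt δ (n:ℤ) = ∫ s in ((n:ℝ)*Δt)..((n:ℝ)*Δt + Δt), δ s := by
  simp [cellM]

lemma bang_window (hΔt : 0 < Δt) (hg : 0 < g) (hgW : g ≤ W) (hWK : W ≤ K)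
    (hT : T = (K:ℝ)*Δt) (hΓ : Γ = (W:ℝ)*Δt) (hγ : γ = (g:ℝ)*Δt)
    (hδm : Measurable δ) (hδ01 : ∀ s ∈ Icc (0:ℝ) T, δ s ∈ Icc (0:ℝ) 1)
    (hwin : ∀ t' ∈ Icc (0:ℝ) T, (∫ s in (max (t' - Γ) 0)..t', |δ s|) ≤ γ) :
    ∀ t ∈ Icc (0:ℝ) T, (∫ s in (max (t - Γ) 0)..t, |bang Δt T δ s|) ≤ γ := by
  have hΓ0 : 0 < Γ := by
    rw [hΓ]; have : (1:ℝ) ≤ (W:ℕ) := by exact_mod_cast (hg.trans_le hgW)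
    nlinarith
  have hγ0 : 0 < γ := by
    rw [hγ]; have : (1:ℝ) ≤ (g:ℕ) := by exact_mod_cast hg
    nlinarith
  have hwin' : ∀ t' ∈ Icc (0:ℝ) T, (∫ s in (max (t' - Γ) 0)..t', δ s) ≤ γ := by
    intro t' ht'
    rw [← abs_delta_int hδm hδ01 (le_max_right _ _)
      (max_le (by linarith [ht'.1]) ht'.1) ht'.2]
    exact hwin t' ht'
  intro t ht
  have habs : (∫ s in (max (t - Γ) 0)..t, |bang Δt T δ s|) = ∫ s in (max (t - Γ) 0)..t, bang Δt T δ s :=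
    intervalIntegral.integral_congr (fun s _ => abs_bang s)
  rw [habs]
  rcases eq_or_lt_of_le ht.1 with h0 | h0
  · rw [← h0, max_eq_right (by linarith), intervalIntegral.integral_same]; linarith
  · obtain ⟨n, hnK, hnt1, hnt2⟩ := exists_cell hΔt h0 (hT ▸ ht.2)
    have hnT : (n:ℝ)*Δt + Δt ≤ T := by
      rw [hT]
      have : ((n:ℝ)+1) ≤ (K:ℝ) := by exact_mod_cast hnK
      nlinarith
    have hΦt : (∫ s in (0:ℝ)..t, bang Δt T δ s)
        = (∫ s in (0:ℝ)..((n:ℝ)*Δt), δ s) + min (t - (n:ℝ)*Δt) (cellM Δt δ n) := by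
      rw [Phi_cell hΔt hδm hδ01 hnT hnt1.le hnt2, Phi_grid hΔt hδm hδ01 hT n hnK.le]
    have hMn : min (t - (n:ℝ)*Δt) (cellM Δt δ n) ≤ cellM Δt δ n := min_le_right _ _
    have hn0 : (0:ℝ) ≤ (n:ℝ)*Δt := by positivity
    have E2 : (∫ s in (0:ℝ)..((n:ℝ)*Δt), δ s) + cellM Δt δ n
        = ∫ s in (0:ℝ)..((n:ℝ)*Δt + Δt), δ s := by
      rw [cellM_nat]
      exact intervalIntegral.integral_add_adjacent_intervals
        (ii_delta hδm hδ01 le_rfl hn0 (by linarith))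
        (ii_delta hδm hδ01 hn0 (by linarith) hnT)
    rcases le_or_gt t Γ with hcase | hcase
    · -- window touches 0
      rw [max_eq_right (by linarith)]
      have hwt := hwin' ((n:ℝ)*Δt + Δt) ⟨by linarith, hnT⟩
      have hnW : (n:ℝ)*Δt + Δt ≤ Γ := by
        have h1 : (n:ℝ)*Δt < (W:ℝ)*Δt := by rw [hΓ] at hcase; linarith
        have h2 : (n:ℝ) < (W:ℝ) := lt_of_mul_lt_mul_right h1 hΔt.le
        have h3 : n < W := by exact_mod_cast h2
        have h4 : ((n:ℝ)+1) ≤ (W:ℝ) := by exact_mod_cast h3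
        rw [hΓ]; nlinarith
      rw [max_eq_right (by linarith)] at hwt
      linarith
    · -- interior window
      rw [max_eq_left (by linarith)]
      have hWn : W ≤ n := by
        by_contra hc
        push_neg at hc
        have h4 : ((n:ℝ)+1) ≤ (W:ℝ) := by exact_mod_cast hc
        have : t ≤ Γ := by rw [hΓ]; nlinarith
        linarith
      set p : ℕ := n - W with hp
      have hpn : (p:ℝ) = (n:ℝ) - (W:ℝ) := by
        rw [hp, Nat.cast_sub hWn]
      have hpeq : (p:ℝ)*Δt = (n:ℝ)*Δt - (W:ℝ)*Δt := by rw [hpn]; ring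
      have hple : (p:ℝ) ≤ (n:ℝ) := by
        have : p ≤ n := Nat.sub_le n W
        exact_mod_cast this
      have hpK : p ≤ K := le_trans (Nat.sub_le n W) hnK.le
      have hpT : (p:ℝ)*Δt + Δt ≤ T := by nlinarith
      have hp0 : (0:ℝ) ≤ (p:ℝ)*Δt := by positivity
      have ha1 : (p:ℝ)*Δt ≤ t - Γ := by rw [hΓ]; linarith [hpeq]
      have ha2 : t - Γ ≤ (p:ℝ)*Δt + Δt := by rw [hΓ]; linarith [hpeq]
      have harg : t - Γ - (p:ℝ)*Δt = t - (n:ℝ)*Δt := by rw [hΓ]; linarith [hpeq]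
      have hΦa : (∫ s in (0:ℝ)..(t - Γ), bang Δt T δ s)
          = (∫ s in (0:ℝ)..((p:ℝ)*Δt), δ s) + min (t - (n:ℝ)*Δt) (cellM Δt δ p) := by
        rw [Phi_cell hΔt hδm hδ01 hpT ha1 ha2, Phi_grid hΔt hδm hδ01 hT p hpK, harg]
      have hsub := intervalIntegral.integral_interval_sub_left
        (ii_bang (Δt := Δt) (T := T) (δ := δ) 0 t) (ii_bang (Δt := Δt) (T := T) (δ := δ) 0 (t - Γ))
      have E1 : (∫ s in (0:ℝ)..((p:ℝ)*Δt), δ s) + cellM Δt δ p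
          = ∫ s in (0:ℝ)..((p:ℝ)*Δt + Δt), δ s := by
        rw [cellM_nat]
        exact intervalIntegral.integral_add_adjacent_intervals
          (ii_delta hδm hδ01 le_rfl hp0 (by linarith))
          (ii_delta hδm hδ01 hp0 (by linarith) hpT)
      rcases le_total (cellM Δt δ p) (t - (n:ℝ)*Δt) with hmp | hmp
      · -- mass of cell p fits before the window start
        have hwb := hwin' ((n:ℝ)*Δt + Δt) ⟨by linarith, hnT⟩
        have hshift : (n:ℝ)*Δt + Δt - Γ = (p:ℝ)*Δt + Δt := by rw [hΓ]; linarith [hpeq]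
        rw [hshift, max_eq_left (by linarith)] at hwb
        have Esub2 := intervalIntegral.integral_interval_sub_left
          (ii_delta hδm hδ01 (a := 0) (b := (n:ℝ)*Δt + Δt) le_rfl (by linarith) hnT)
          (ii_delta hδm hδ01 (a := 0) (b := (p:ℝ)*Δt + Δt) le_rfl (by linarith) (by linarith))
        rw [min_eq_right hmp] at hΦa
        linarith
      · -- window start cuts inside the mass of cell p
        have hwa := hwin' ((n:ℝ)*Δt) ⟨hn0, by linarith⟩
        have hshift : (n:ℝ)*Δt - Γ = (p:ℝ)*Δt := by rw [hΓ]; linarith [hpeq]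
        rw [hshift, max_eq_left hp0] at hwa
        have Esub := intervalIntegral.integral_interval_sub_left
          (ii_delta hδm hδ01 (a := 0) (b := (n:ℝ)*Δt) le_rfl hn0 (by linarith))
          (ii_delta hδm hδ01 (a := 0) (b := (p:ℝ)*Δt) le_rfl hp0 (by linarith))
        rw [min_eq_left hmp] at hΦa
        have hMn2 : min (t - (n:ℝ)*Δt) (cellM Δt δ n) ≤ t - (n:ℝ)*Δt := min_le_left _ _
        linarith

end
section
variable {Δt T : ℝ} {K : ℕ} {f : ℝ → ℝ → ℝ}

lemma f_bdd (hcont : ∀ t, Continuous (fun z => f z t)) (τ : ℝ) :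
    ∃ C : ℝ, ∀ z ∈ Icc (0:ℝ) 1, |f z τ| ≤ C := by
  obtain ⟨z₀, hz₀, hmax⟩ := (isCompact_Icc (a := (0:ℝ)) (b := 1)).exists_isMaxOn
    (nonempty_Icc.mpr zero_le_one) ((continuous_abs.comp (hcont τ)).continuousOn)
  exact ⟨|f z₀ τ|, fun z hz => hmax hz⟩

/-- interval integrability of `s ↦ f (w s) s` on one cell -/
lemma ii_comp (hΔt : 0 < Δt)
    (hcont : ∀ t, Continuous (fun z => f z t))
    (hpc : ∀ z, ∀ k : ℕ, k < K →
      ∀ s₁ ∈ Ico ((k : ℝ) * Δt) (((k : ℝ) + 1) * Δt),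
      ∀ s₂ ∈ Ico ((k : ℝ) * Δt) (((k : ℝ) + 1) * Δt), f z s₁ = f z s₂)
    {w : ℝ → ℝ} (hwm : Measurable w) (hw01 : ∀ s ∈ Icc (0:ℝ) T, w s ∈ Icc (0:ℝ) 1)
    {n : ℕ} (hnK : n < K) (hnT : (n:ℝ)*Δt + Δt ≤ T) (h0 : 0 ≤ (n:ℝ)*Δt)
    {a b : ℝ} (ha : (n:ℝ)*Δt ≤ a) (hab : a ≤ b) (hb : b ≤ (n:ℝ)*Δt + Δt) :
    IntervalIntegrable (fun s => f (w s) s) volume a b := by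
  have hτ : ((n:ℝ))*Δt ∈ Ico ((n:ℝ)*Δt) (((n:ℝ)+1)*Δt) := by
    constructor
    · exact le_rfl
    · nlinarith
  have hae : ∀ᵐ s ∂(volume.restrict (Ι a b)), f (w s) s = f (w s) ((n:ℝ)*Δt) := by
    refine (ae_restrict_iff' measurableSet_uIoc).2 ?_
    filter_upwards [ae_ne_real ((n:ℝ)*Δt + Δt)] with s hne hmem
    rw [uIoc_of_le hab] at hmem
    have hs : s ∈ Ico ((n:ℝ)*Δt) (((n:ℝ)+1)*Δt) := by
      constructor
      · linarith [hmem.1]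
      · have : s < (n:ℝ)*Δt + Δt := lt_of_le_of_ne (hmem.2.trans hb) hne
        nlinarith
    exact hpc (w s) n hnK s hs ((n:ℝ)*Δt) hτ
  obtain ⟨C, hC⟩ := f_bdd hcont ((n:ℝ)*Δt)
  have hg : IntervalIntegrable (fun s => f (w s) ((n:ℝ)*Δt)) volume a b := by
    refine ii_of_bdd (((hcont ((n:ℝ)*Δt)).measurable.comp hwm).aestronglyMeasurable) (C := C) ?_
    intro s hs
    rw [uIoc_of_le hab] at hs
    exact hC (w s) (hw01 s ⟨h0.trans (ha.trans hs.1.le), (hs.2.trans hb).trans hnT⟩)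
  have hae' : (fun s => f (w s) ((n:ℝ)*Δt)) =ᵐ[volume.restrict (Ι a b)] (fun s => f (w s) s) :=
    hae.mono fun s hs => hs.symm
  rw [intervalIntegrable_iff] at hg ⊢
  exact hg.congr hae'

/-- gluing interval integrability along the grid -/
lemma glue_ii (hΔt : 0 < Δt) (K : ℕ) (h : ℝ → ℝ) {t : ℝ} (h0 : 0 ≤ t) (hK : t ≤ (K:ℝ)*Δt)
    (hcell : ∀ n : ℕ, n < K →
      IntervalIntegrable h volume (min t ((n:ℝ)*Δt)) (min t ((n:ℝ)*Δt + Δt))) :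
    IntervalIntegrable h volume 0 t := by
  have claim : ∀ d : ℕ, d ≤ K → IntervalIntegrable h volume (min t (((K - d : ℕ):ℝ)*Δt)) t := by
    intro d
    induction d with
    | zero =>
      intro _
      simp only [Nat.sub_zero]
      rw [min_eq_left hK]
    | succ d ih =>
      intro hd
      have hdK : d ≤ K := Nat.le_of_succ_le hd
      set n : ℕ := K - (d+1) with hn
      have hnK : n < K := by omega
      have hsucc : ((K - d : ℕ):ℝ)*Δt = (n:ℝ)*Δt + Δt := by
        have : K - d = n + 1 := by omega
        rw [this]; push_cast; ring
      have step := hcell n hnK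
      rw [← hsucc] at step
      exact step.trans (ih hdK)
  have := claim K le_rfl
  simpa [min_eq_right h0] using this

/-- gluing the pointwise-on-cells integral inequality along the grid -/
lemma glue_le (hΔt : 0 < Δt) (K : ℕ) (h₁ h₂ : ℝ → ℝ) {t : ℝ} (h0 : 0 ≤ t)
    (hK : t ≤ (K:ℝ)*Δt)
    (H1 : IntervalIntegrable h₁ volume 0 t) (H2 : IntervalIntegrable h₂ volume 0 t)
    (hcell : ∀ n : ℕ, n < K → ∀ b, (n:ℝ)*Δt ≤ b → b ≤ (n:ℝ)*Δt + Δt → b ≤ t →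
      (∫ s in ((n:ℝ)*Δt)..b, h₁ s) ≤ ∫ s in ((n:ℝ)*Δt)..b, h₂ s) :
    (∫ s in (0:ℝ)..t, h₁ s) ≤ ∫ s in (0:ℝ)..t, h₂ s := by
  have claim : ∀ d : ℕ, d ≤ K →
      (∫ s in (min t (((K - d : ℕ):ℝ)*Δt))..t, h₁ s) ≤ ∫ s in (min t (((K - d : ℕ):ℝ)*Δt))..t, h₂ s := by
    intro d
    induction d with
    | zero =>
      intro _
      simp only [Nat.sub_zero]
      rw [min_eq_left hK]
      simp
    | succ d ih =>
      intro hd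
      have hdK : d ≤ K := Nat.le_of_succ_le hd
      set n : ℕ := K - (d+1) with hn
      have hnK : n < K := by omega
      have hn0 : (0:ℝ) ≤ (n:ℝ)*Δt := by positivity
      have hsucc : ((K - d : ℕ):ℝ)*Δt = (n:ℝ)*Δt + Δt := by
        have : K - d = n + 1 := by omega
        rw [this]; push_cast; ring
      rcases le_or_gt t ((n:ℝ)*Δt) with hc | hc
      · rw [min_eq_left hc]
        simp
      · rw [min_eq_right hc.le]
        set q : ℝ := min t ((n:ℝ)*Δt + Δt) with hq
        have hq1 : (n:ℝ)*Δt ≤ q := le_min hc.le (by linarith)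
        have hq2 : q ≤ t := min_le_left _ _
        have hq3 : q ≤ (n:ℝ)*Δt + Δt := min_le_right _ _
        have sub1 : IntervalIntegrable h₁ volume ((n:ℝ)*Δt) q :=
          H1.mono_set' (by rw [uIoc_of_le hq1, uIoc_of_le h0]; exact Ioc_subset_Ioc hn0 hq2)
        have sub1' : IntervalIntegrable h₁ volume q t :=
          H1.mono_set' (by rw [uIoc_of_le hq2, uIoc_of_le h0]; exact Ioc_subset_Ioc (by linarith) le_rfl)
        have sub2 : IntervalIntegrable h₂ volume ((n:ℝ)*Δt) q :=
          H2.mono_set' (by rw [uIoc_of_le hq1, uIoc_of_le h0]; exact Ioc_subset_Ioc hn0 hq2)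
        have sub2' : IntervalIntegrable h₂ volume q t :=
          H2.mono_set' (by rw [uIoc_of_le hq2, uIoc_of_le h0]; exact Ioc_subset_Ioc (by linarith) le_rfl)
        have e1 := (intervalIntegral.integral_add_adjacent_intervals sub1 sub1').symm
        have e2 := (intervalIntegral.integral_add_adjacent_intervals sub2 sub2').symm
        rw [e1, e2]
        have hpiece := hcell n hnK q hq1 hq3 hq2
        have hih := ih hdK
        rw [hsucc, ← hq] at hih
        exact add_le_add hpiece hih
  have := claim K le_rfl
  simpa [min_eq_right h0] using this
end
section
variable {Δt T : ℝ} {K : ℕ} {f : ℝ → ℝ → ℝ} {δ : ℝ → ℝ}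

lemma piece_le (hΔt : 0 < Δt)
    (hconc : ∀ t, ConcaveOn ℝ Set.univ (fun z => f z t))
    (hcont : ∀ t, Continuous (fun z => f z t))
    (hanti : ∀ t, Antitone (fun z => f z t))
    (hpc : ∀ z, ∀ k : ℕ, k < K →
      ∀ s₁ ∈ Ico ((k : ℝ) * Δt) (((k : ℝ) + 1) * Δt),
      ∀ s₂ ∈ Ico ((k : ℝ) * Δt) (((k : ℝ) + 1) * Δt), f z s₁ = f z s₂)
    (hδm : Measurable δ) (hδ01 : ∀ s ∈ Icc (0:ℝ) T, δ s ∈ Icc (0:ℝ) 1)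
    {n : ℕ} (hnK : n < K) (hnT : (n:ℝ)*Δt + Δt ≤ T)
    {b : ℝ} (ha : (n:ℝ)*Δt ≤ b) (hb : b ≤ (n:ℝ)*Δt + Δt) :
    (∫ s in ((n:ℝ)*Δt)..b, f (bang Δt T δ s) s) ≤ ∫ s in ((n:ℝ)*Δt)..b, f (δ s) s := by
  set τ : ℝ := (n:ℝ)*Δt with hτdef
  have hτ0 : 0 ≤ τ := by positivity
  set M : ℝ := cellM Δt δ n with hMdef
  have hM0 : 0 ≤ M := cellM_nonneg hδm hδ01 hnT hΔt
  set f0 : ℝ := f 0 τ with hf0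
  set f1 : ℝ := f 1 τ with hf1
  have hτmem : τ ∈ Ico ((n:ℝ)*Δt) (((n:ℝ)+1)*Δt) := by
    constructor
    · exact le_rfl
    · rw [hτdef]; nlinarith
  have hIco : ∀ᵐ s : ℝ, s ∈ Ι τ b → s ∈ Ico ((n:ℝ)*Δt) (((n:ℝ)+1)*Δt) := by
    filter_upwards [ae_ne_real (τ + Δt)] with s hne hmem
    rw [uIoc_of_le ha] at hmem
    constructor
    · exact le_trans le_rfl hmem.1.le
    · have : s < τ + Δt := lt_of_le_of_ne (hmem.2.trans hb) hne
      nlinarith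
  -- left side: exact evaluation
  have e1 : (∫ s in τ..b, f (bang Δt T δ s) s)
      = ∫ s in τ..b, (f0 + (f1 - f0) * bang Δt T δ s) := by
    refine intervalIntegral.integral_congr_ae ?_
    filter_upwards [hIco] with s hs hmem
    rw [hpc (bang Δt T δ s) n hnK s (hs hmem) τ hτmem]
    rcases bang_mem01 (Δt := Δt) (T := T) (δ := δ) s with h | h <;> rw [h] <;> ring_nf <;> rfl
  have e2 : (∫ s in τ..b, (f0 + (f1 - f0) * bang Δt T δ s))
      = f0 * (b - τ) + (f1 - f0) * (min (b - τ) M) := by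
    rw [intervalIntegral.integral_add (intervalIntegrable_const (c := f0))
      ((ii_bang τ b).const_mul (f1 - f0)), intervalIntegral.integral_const_mul,
      intervalIntegral.integral_const]
    have : (∫ s in τ..b, bang Δt T δ s) = min b (τ + M) - min τ (τ + M) :=
      integral_bang_cell hΔt hnT le_rfl ha hb
    rw [this, min_eq_left (show τ ≤ τ + M by linarith)]
    have h2 : min b (τ + M) - τ = min (b - τ) M := by
      rcases le_total b (τ + M) with h | h
      · rw [min_eq_left h, min_eq_left (show b - τ ≤ M by linarith)]
      · rw [min_eq_right h, min_eq_right (show M ≤ b - τ by linarith)]; ring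
    rw [h2, smul_eq_mul]
    ring
  -- right side
  have e3 : (∫ s in τ..b, f (δ s) s) = ∫ s in τ..b, f (δ s) τ := by
    refine intervalIntegral.integral_congr_ae ?_
    filter_upwards [hIco] with s hs hmem
    exact hpc (δ s) n hnK s (hs hmem) τ hτmem
  obtain ⟨C, hC⟩ := f_bdd hcont τ
  have hii : IntervalIntegrable (fun s => f (δ s) τ) volume τ b := by
    refine ii_of_bdd (((hcont τ).measurable.comp hδm).aestronglyMeasurable) (C := C) ?_
    intro s hs
    rw [uIoc_of_le ha] at hs
    exact hC (δ s) (hδ01 s ⟨hτ0.trans hs.1.le, (hs.2.trans hb).trans hnT⟩)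
  have hii2 : IntervalIntegrable (fun s => f0 + (f1 - f0) * δ s) volume τ b :=
    (intervalIntegrable_const (c := f0)).add
      ((ii_delta hδm hδ01 hτ0 ha (hb.trans hnT)).const_mul (f1 - f0))
  have e4 : (∫ s in τ..b, (f0 + (f1 - f0) * δ s)) ≤ ∫ s in τ..b, f (δ s) τ := by
    refine intervalIntegral.integral_mono_on ha hii2 hii ?_
    intro s hs
    have hz : δ s ∈ Icc (0:ℝ) 1 := hδ01 s ⟨hτ0.trans hs.1, (hs.2.trans hb).trans hnT⟩
    have hcc := (hconc τ).2 (mem_univ (1:ℝ)) (mem_univ (0:ℝ)) hz.1 (by linarith [hz.2])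
      (by ring : δ s + (1 - δ s) = 1)
    simp only [smul_eq_mul, mul_one, mul_zero, add_zero] at hcc
    calc f0 + (f1 - f0) * δ s = δ s * f1 + (1 - δ s) * f0 := by ring
    _ ≤ f (δ s) τ := hcc
  have e5 : (∫ s in τ..b, (f0 + (f1 - f0) * δ s))
      = f0 * (b - τ) + (f1 - f0) * ∫ s in τ..b, δ s := by
    rw [intervalIntegral.integral_add (intervalIntegrable_const (c := f0))
      ((ii_delta hδm hδ01 hτ0 ha (hb.trans hnT)).const_mul (f1 - f0)),
      intervalIntegral.integral_const_mul, intervalIntegral.integral_const]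
    rw [smul_eq_mul]
    ring
  have hf10 : f1 ≤ f0 := hanti τ zero_le_one
  have hδle : (∫ s in τ..b, δ s) ≤ min (b - τ) M :=
    delta_int_le_min hδm hδ01 hnT hΔt ha hb
  have hmul : (f1 - f0) * (min (b - τ) M) ≤ (f1 - f0) * ∫ s in τ..b, δ s :=
    mul_le_mul_of_nonpos_left hδle (by linarith)
  rw [e1, e2, e3]
  linarith
end

/-- Lemma 1: for a function `f(z,t)` that is concave,
continuous and nonincreasing in `z` and piecewise constant on the trading
intervals in `t`, the infimum of `∫₀ᵗ f(δ(s),s) ds` over `D⁺` equals the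
infimum over the `{0,1}`-valued elements of `D⁺`. -/
theorem stmt_12 (Δt : ℝ) (K W g : ℕ) (hΔt : 0 < Δt)
    (hg : 0 < g) (hgW : g ≤ W) (hWK : W ≤ K)
    (T Γ γ : ℝ) (hT : T = K * Δt) (hΓ : Γ = W * Δt) (hγ : γ = g * Δt)
    (f : ℝ → ℝ → ℝ)
    (hconc : ∀ t, ConcaveOn ℝ Set.univ (fun z => f z t))
    (hcont : ∀ t, Continuous (fun z => f z t))
    (hanti : ∀ t, Antitone (fun z => f z t))
    (hpc : ∀ z, ∀ k : ℕ, k < K →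
      ∀ s₁ ∈ Ico ((k : ℝ) * Δt) (((k : ℝ) + 1) * Δt),
      ∀ s₂ ∈ Ico ((k : ℝ) * Δt) (((k : ℝ) + 1) * Δt), f z s₁ = f z s₂) :
    ∀ t ∈ Icc (0:ℝ) T,
      sInf {v : ℝ | ∃ δ ∈ DsetPlus T Γ γ, v = ∫ s in (0:ℝ)..t, f (δ s) s} =
        sInf {v : ℝ | ∃ δ ∈ DsetPlus T Γ γ,
          (∀ s ∈ Icc (0:ℝ) T, δ s = 0 ∨ δ s = 1) ∧
          v = ∫ s in (0:ℝ)..t, f (δ s) s} := by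
  intro t ht
  set A := {v : ℝ | ∃ δ ∈ DsetPlus T Γ γ, v = ∫ s in (0:ℝ)..t, f (δ s) s} with hA
  set B := {v : ℝ | ∃ δ ∈ DsetPlus T Γ γ,
      (∀ s ∈ Icc (0:ℝ) T, δ s = 0 ∨ δ s = 1) ∧
      v = ∫ s in (0:ℝ)..t, f (δ s) s} with hB
  have ht0 : 0 ≤ t := ht.1
  have htT : t ≤ (K:ℝ)*Δt := hT ▸ ht.2
  have hγ0 : (0:ℝ) ≤ γ := by rw [hγ]; positivity
  have hδ0mem : (fun _ : ℝ => (0:ℝ)) ∈ DsetPlus T Γ γ := by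
    refine ⟨⟨measurable_const, fun s _ => ?_, fun s _ => ?_⟩, fun s _ => ?_⟩
    · constructor <;> norm_num
    · simp [hγ0]
    · constructor <;> norm_num
  have hAne : A.Nonempty := ⟨_, ⟨_, hδ0mem, rfl⟩⟩
  have hBne : B.Nonempty := ⟨_, ⟨_, hδ0mem, fun s _ => Or.inl rfl, rfl⟩⟩
  have hBA : B ⊆ A := by rintro v ⟨d, hd, _, rfl⟩; exact ⟨d, hd, rfl⟩
  have hcellT : ∀ n : ℕ, n < K → (n:ℝ)*Δt + Δt ≤ T := by
    intro n hnK
    rw [hT]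
    have : ((n:ℝ)+1) ≤ (K:ℝ) := by exact_mod_cast hnK
    nlinarith
  have hII : ∀ (w : ℝ → ℝ), Measurable w → (∀ s ∈ Icc (0:ℝ) T, w s ∈ Icc (0:ℝ) 1) →
      IntervalIntegrable (fun s => f (w s) s) volume 0 t := by
    intro w hwm hw01
    refine glue_ii hΔt K _ ht0 htT ?_
    intro n hnK
    have hn0 : (0:ℝ) ≤ (n:ℝ)*Δt := by positivity
    have hnT := hcellT n hnK
    rcases le_or_gt t ((n:ℝ)*Δt) with hc | hc
    · have heq : min t ((n:ℝ)*Δt) = min t ((n:ℝ)*Δt + Δt) := by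
        rw [min_eq_left hc, min_eq_left (by linarith)]
      rw [heq]
    · have hq1 : (n:ℝ)*Δt ≤ min t ((n:ℝ)*Δt + Δt) := le_min hc.le (by linarith)
      rw [min_eq_right hc.le]
      exact ii_comp hΔt hcont hpc hwm hw01 hnK hnT hn0 le_rfl hq1 (min_le_right _ _)
  have hw101 : ∀ s ∈ Icc (0:ℝ) T, (fun _ : ℝ => (1:ℝ)) s ∈ Icc (0:ℝ) 1 :=
    fun s _ => ⟨zero_le_one, le_rfl⟩
  have hlb : ∀ v ∈ A, (∫ s in (0:ℝ)..t, f 1 s) ≤ v := by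
    rintro v ⟨d, ⟨⟨hdm, hdv, hdw⟩, hdp⟩, rfl⟩
    refine intervalIntegral.integral_mono_on ht0
      (hII _ measurable_const hw101) (hII d hdm hdp) ?_
    intro s hs
    exact hanti s (hdp s ⟨hs.1, hs.2.trans ht.2⟩).2
  have hbddA : BddBelow A := ⟨∫ s in (0:ℝ)..t, f 1 s, fun v hv => hlb v hv⟩
  have dir1 : sInf A ≤ sInf B := csInf_le_csInf hbddA hBne hBA
  have dir2 : sInf B ≤ sInf A := by
    refine le_csInf hAne ?_
    rintro v ⟨d, hd, rfl⟩
    obtain ⟨⟨hdm, hdv, hdw⟩, hdp⟩ := hd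
    have hb01 : ∀ s ∈ Icc (0:ℝ) T, bang Δt T d s ∈ Icc (0:ℝ) 1 :=
      fun s _ => ⟨bang_nonneg s, bang_le_one s⟩
    have hbmem : bang Δt T d ∈ DsetPlus T Γ γ := by
      refine ⟨⟨bang_measurable, fun s hs => ?_, ?_⟩, hb01⟩
      · exact ⟨by linarith [bang_nonneg (Δt := Δt) (T := T) (δ := d) s], bang_le_one s⟩
      · exact bang_window hΔt hg hgW hWK hT hΓ hγ hdm hdp hdw
    have hle : (∫ s in (0:ℝ)..t, f (bang Δt T d s) s) ≤ ∫ s in (0:ℝ)..t, f (d s) s := by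
      refine glue_le hΔt K _ _ ht0 htT (hII _ bang_measurable hb01) (hII d hdm hdp) ?_
      intro n hnK b hb1 hb2 _
      exact piece_le hΔt hconc hcont hanti hpc hdm hdp hnK (hcellT n hnK) hb1 hb2
    have hmemB : (∫ s in (0:ℝ)..t, f (bang Δt T d s) s) ∈ B :=
      ⟨bang Δt T d, hbmem, fun s _ => bang_mem01 s, rfl⟩
    exact le_trans (csInf_le (hbddA.mono hBA) hmemB) hle
  exact le_antisymm dir1 dir2
end
end

section
/- Let K, N be positive integers and let W = N·Γ/Δt and g = N·γ/Δt be positive integers with g ≤ W. Define the polytope P = { δ ∈ [0,1]^{KN} : Σ_{l = 1+max(m−W,0)}^{m} δ_l ≤ g for every m ∈ {1,…,KN} }. Then every extreme point of P is a binary vector, i.e. lies in {0,1}^{KN}. -/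
open MeasureTheory Set

noncomputable section

/-- sum of integers is integer -/
lemma sum_int {α : Type*} (s : Finset α) (f : α → ℝ)
    (h : ∀ i ∈ s, ∃ z : ℤ, f i = (z : ℝ)) : ∃ z : ℤ, ∑ i ∈ s, f i = (z : ℝ) := by
  classical
  induction s using Finset.induction_on with
  | empty => exact ⟨0, by simp⟩
  | @insert a s' hni ih =>
    obtain ⟨z1, hz1⟩ := h a (Finset.mem_insert_self a s')
    obtain ⟨z2, hz2⟩ := ih (fun i hi => h i (Finset.mem_insert_of_mem hi))
    exact ⟨z1 + z2, by rw [Finset.sum_insert hni, hz1, hz2]; push_cast; ring⟩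

/-- Integrality of injective interval systems. -/
lemma intA : ∀ (p : ℕ) (x : ℕ → ℝ) (R : Finset (ℕ × ℕ)),
    (∀ r ∈ R, r.1 ≤ r.2) →
    (∀ r ∈ R, r.2 < p) →
    (∀ r ∈ R, ∃ z : ℤ, ∑ i ∈ Finset.Icc r.1 r.2, x i = (z : ℝ)) →
    (∀ d : ℕ → ℝ, (∀ i, p ≤ i → d i = 0) →
      (∀ r ∈ R, ∑ i ∈ Finset.Icc r.1 r.2, d i = 0) → ∀ i, d i = 0) →
    ∀ i < p, ∃ z : ℤ, x i = (z : ℝ) := by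
  intro p
  induction p with
  | zero => intro x R _ _ _ _ i hi; omega
  | succ p IH =>
    intro x R hord hlt hint hinj
    classical
    set E := R.filter (fun r => r.2 = p) with hE
    by_cases hEne : E.Nonempty
    · -- a* : max left endpoint among rows ending at p
      set A := E.image Prod.fst with hA
      have hAne : A.Nonempty := hEne.image _
      set a : ℕ := A.max' hAne with ha
      have haR : (a, p) ∈ R := by
        obtain ⟨r, hrE, hr1⟩ := Finset.mem_image.1 (A.max'_mem hAne)
        have h2 : r.2 = p := (Finset.mem_filter.1 hrE).2
        have := (Finset.mem_filter.1 hrE).1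
        rwa [show (a, p) = r by rw [ha, ← hr1, ← h2]]
      have hap : a ≤ p := hord _ haR
      -- derived rows
      set R' : Finset (ℕ × ℕ) :=
        (R.filter (fun r => r.2 < p)) ∪
        ((E.filter (fun r => r.1 < a)).image (fun r => (r.1, a - 1))) with hR'
      have hmemR' : ∀ r ∈ R', (r.2 < p ∧ r ∈ R) ∨
          (∃ b < a, (b, p) ∈ R ∧ r = (b, a - 1)) := by
        intro r hr
        rcases Finset.mem_union.1 hr with h | h
        · exact Or.inl ⟨(Finset.mem_filter.1 h).2, (Finset.mem_filter.1 h).1⟩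
        · obtain ⟨s, hs, hsr⟩ := Finset.mem_image.1 h
          have hs1 := Finset.mem_filter.1 hs
          have hs2 := Finset.mem_filter.1 hs1.1
          refine Or.inr ⟨s.1, hs1.2, ?_, hsr.symm⟩
          rw [show (s.1, p) = s by rw [← hs2.2]]
          exact hs2.1
      have hord' : ∀ r ∈ R', r.1 ≤ r.2 := by
        intro r hr
        rcases hmemR' r hr with ⟨_, h⟩ | ⟨b, hb, _, h⟩
        · exact hord r h
        · subst h; simp; omega
      have hlt' : ∀ r ∈ R', r.2 < p := by
        intro r hr
        rcases hmemR' r hr with ⟨h, _⟩ | ⟨b, hb, _, h⟩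
        · exact h
        · subst h; simp; omega
      -- splitting lemma
      have hsplit : ∀ b < a, Finset.Icc b p = Finset.Icc b (a-1) ∪ Finset.Icc a p := by
        intro b hb; ext i; simp [Finset.mem_Icc, Finset.mem_union]; omega
      have hdisj : ∀ b < a, Disjoint (Finset.Icc b (a-1)) (Finset.Icc a p) := by
        intro b hb; rw [Finset.disjoint_left]; intro i h1 h2
        simp [Finset.mem_Icc] at h1 h2; omega
      have hint' : ∀ r ∈ R', ∃ z : ℤ, ∑ i ∈ Finset.Icc r.1 r.2, x i = (z : ℝ) := by
        intro r hr
        rcases hmemR' r hr with ⟨_, h⟩ | ⟨b, hb, hbR, h⟩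
        · exact hint r h
        · subst h
          obtain ⟨z1, hz1⟩ := hint _ hbR
          obtain ⟨z2, hz2⟩ := hint _ haR
          refine ⟨z1 - z2, ?_⟩
          have := hsplit b hb
          simp only at hz1
          rw [this, Finset.sum_union (hdisj b hb)] at hz1
          simp only at hz2 ⊢
          push_cast
          linarith
      have hinj' : ∀ d : ℕ → ℝ, (∀ i, p ≤ i → d i = 0) →
          (∀ r ∈ R', ∑ i ∈ Finset.Icc r.1 r.2, d i = 0) → ∀ i, d i = 0 := by
        intro d hsupp hrows
        set d' : ℕ → ℝ := fun i => if i = p then -∑ j ∈ Finset.Ico a p, d j else d i with hd'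
        have hd'lt : ∀ i, i ≠ p → d' i = d i := by intro i hi; simp [hd', hi]
        have key : ∀ i, d' i = 0 := by
          apply hinj d'
          · intro i hi
            have : i ≠ p := by omega
            rw [hd'lt i this]; exact hsupp i (by omega)
          · intro r hr
            by_cases h2 : r.2 = p
            · -- row ends at p
              have hr1a : r.1 ≤ a := Finset.le_max' A r.1 (Finset.mem_image.2 ⟨r, Finset.mem_filter.2 ⟨hr, h2⟩, rfl⟩)
              have hIccsum : ∑ i ∈ Finset.Icc a p, d' i = 0 := by
                have : Finset.Icc a p = Finset.Ico a p ∪ {p} := by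
                  ext i; simp [Finset.mem_Icc, Finset.mem_Ico]; omega
                rw [this, Finset.sum_union (by rw [Finset.disjoint_right]; intro i h1 h2; simp at h1 h2; omega)]
                have : ∑ i ∈ Finset.Ico a p, d' i = ∑ i ∈ Finset.Ico a p, d i := by
                  apply Finset.sum_congr rfl; intro i hi; simp at hi; exact hd'lt i (by omega)
                rw [this]; simp [hd']
              rcases eq_or_lt_of_le hr1a with heq | hlt1
              · have : r = (a, p) := by rw [← heq, ← h2]
                rw [this]; exact hIccsum
              · have hsplit2 := hsplit r.1 hlt1
                have : ∑ i ∈ Finset.Icc r.1 r.2, d' i = ∑ i ∈ Finset.Icc r.1 (a-1), d' i + ∑ i ∈ Finset.Icc a p, d' i := by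
                  rw [h2, hsplit2, Finset.sum_union (hdisj r.1 hlt1)]
                rw [this, hIccsum]
                have h1 : ∑ i ∈ Finset.Icc r.1 (a-1), d' i = ∑ i ∈ Finset.Icc r.1 (a-1), d i := by
                  apply Finset.sum_congr rfl; intro i hi; simp [Finset.mem_Icc] at hi
                  exact hd'lt i (by omega)
                rw [h1]
                have hrow : (r.1, a - 1) ∈ R' := by
                  apply Finset.mem_union_right
                  exact Finset.mem_image.2 ⟨r, Finset.mem_filter.2 ⟨Finset.mem_filter.2 ⟨hr, h2⟩, hlt1⟩, by simp⟩
                have := hrows _ hrow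
                simp only at this
                rw [this]; ring
            · -- row ends below p
              have h2' : r.2 < p := by have := hlt r hr; omega
              have : ∑ i ∈ Finset.Icc r.1 r.2, d' i = ∑ i ∈ Finset.Icc r.1 r.2, d i := by
                apply Finset.sum_congr rfl; intro i hi; simp [Finset.mem_Icc] at hi
                exact hd'lt i (by omega)
              rw [this]
              exact hrows r (Finset.mem_union_left _ (Finset.mem_filter.2 ⟨hr, h2'⟩))
        intro i
        by_cases hi : i = p
        · rw [hi]; exact hsupp p le_rfl
        · rw [← hd'lt i hi]; exact key i
      have hIH := IH x R' hord' hlt' hint' hinj'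
      intro i hi
      rcases Nat.lt_or_ge i p with h | h
      · exact hIH i h
      · have hip : i = p := by omega
        subst hip
        obtain ⟨z, hz⟩ := hint _ haR
        obtain ⟨z2, hz2⟩ := sum_int (Finset.Ico a i) x (fun j hj => hIH j (by simp [Finset.mem_Ico] at hj; omega))
        refine ⟨z - z2, ?_⟩
        have : Finset.Icc a i = Finset.Ico a i ∪ {i} := by
          ext j; simp [Finset.mem_Icc, Finset.mem_Ico]; omega
        simp only at hz
        rw [this, Finset.sum_union (by rw [Finset.disjoint_right]; intro j h1 h2; simp at h1 h2; omega)] at hz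
        simp at hz
        push_cast
        linarith
    · -- no row ends at p : indicator of p is in kernel, contradiction-free conclusion
      intro i hi
      rcases Nat.lt_or_ge i p with h | h
      · refine IH x R (fun r hr => hord r hr) (fun r hr => ?_) hint
          (fun d hs hr => hinj d (fun j hj => hs j (by omega)) hr) i h
        have h2 := hlt r hr
        have : r.2 ≠ p := fun hh => hEne ⟨r, Finset.mem_filter.2 ⟨hr, hh⟩⟩
        omega
      · exfalso
        have hip : i = p := by omega
        set d : ℕ → ℝ := fun j => if j = p then 1 else 0 with hd
        have := hinj d (fun j hj => by simp [hd]; omega)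
          (fun r hr => by
            have h2 := hlt r hr
            have hne : r.2 ≠ p := fun hh => hEne ⟨r, Finset.mem_filter.2 ⟨hr, hh⟩⟩
            apply Finset.sum_eq_zero
            intro j hj
            simp [Finset.mem_Icc] at hj
            simp [hd]; omega) p
        simp [hd] at this

lemma dc {p : ℕ} (Q : Finset (Fin p)) (hQ : ∀ j ∈ Q, ∀ j', j' ≤ j → j' ∈ Q) (i : Fin p) :
    i ∈ Q ↔ (i : ℕ) < Q.card := by
  constructor
  · intro hi
    have hsub : Finset.Iic i ⊆ Q := fun j hj => hQ i hi j (Finset.mem_Iic.1 hj)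
    have := Finset.card_le_card hsub
    rw [Fin.card_Iic] at this
    omega
  · intro h
    by_contra hi
    have hsub : Q ⊆ Finset.Iio i := by
      intro j hj
      rw [Finset.mem_Iio]
      rcases lt_or_ge j i with h' | h'
      · exact h'
      · exact absurd (hQ j hj i h') hi
    have := Finset.card_le_card hsub
    rw [Fin.card_Iio] at this
    omega

set_option maxHeartbeats 1000000 in
/-- Lemma 2, total unimodularity: every extreme point of the
refined budget polytope `D⁺_{KN}` is a binary vector. -/
theorem stmt_13 (K N W0 g0 : ℕ) (hK : 0 < K) (hN : 0 < N)
    (hg0 : 0 < g0) (hg0W0 : g0 ≤ W0)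
    (Δt Γ γ : ℝ) (hΔt : 0 < Δt) (hΓ : Γ = W0 * Δt) (hγ : γ = g0 * Δt)
    (x : Fin (K * N) → ℝ)
    (hx : x ∈ Set.extremePoints ℝ {δ : Fin (K * N) → ℝ |
      (∀ l, δ l ∈ Icc (0:ℝ) 1) ∧
      ∀ m : Fin (K * N),
        (∑ l ∈ Finset.univ.filter
          (fun l : Fin (K * N) =>
            (m : ℕ) + 1 - N * W0 ≤ (l : ℕ) ∧ (l : ℕ) ≤ (m : ℕ)), δ l)
          ≤ ((N * g0 : ℕ) : ℝ)}) :
    ∀ l, x l = 0 ∨ x l = 1 := by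
  classical
  obtain ⟨hxP, hext⟩ := hx
  set window : Fin (K*N) → Finset (Fin (K*N)) := fun m =>
    Finset.univ.filter (fun l : Fin (K*N) =>
      (m : ℕ) + 1 - N * W0 ≤ (l : ℕ) ∧ (l : ℕ) ≤ (m : ℕ)) with hwindow
  have hxbd : ∀ l, x l ∈ Icc (0:ℝ) 1 := hxP.1
  have hxw : ∀ m, ∑ l ∈ window m, x l ≤ ((N * g0 : ℕ) : ℝ) := hxP.2
  by_contra hcon
  push_neg at hcon
  obtain ⟨l0, hl01, hl02⟩ := hcon
  set Frac : Finset (Fin (K*N)) :=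
    Finset.univ.filter (fun l => x l ≠ 0 ∧ x l ≠ 1) with hFrac
  have hl0F : l0 ∈ Frac := Finset.mem_filter.2 ⟨Finset.mem_univ _, hl01, hl02⟩
  have hFracbd : ∀ l ∈ Frac, 0 < x l ∧ x l < 1 := by
    intro l hl
    obtain ⟨-, h1, h2⟩ := Finset.mem_filter.1 hl
    obtain ⟨hb1, hb2⟩ := hxbd l
    exact ⟨lt_of_le_of_ne hb1 (Ne.symm h1), lt_of_le_of_ne hb2 h2⟩
  set T : Finset (Fin (K*N)) :=
    Finset.univ.filter (fun m => ∑ l ∈ window m, x l = ((N * g0 : ℕ) : ℝ)) with hT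
  by_cases hker : ∃ d : Fin (K*N) → ℝ, d ≠ 0 ∧ (∀ l, l ∉ Frac → d l = 0) ∧
      ∀ m ∈ T, ∑ l ∈ window m, d l = 0
  · -- Case 1 : nontrivial kernel direction, contradict extremeness
    obtain ⟨d, hd0, hdsupp, hdT⟩ := hker
    have hne : (Finset.univ : Finset (Fin (K*N))).Nonempty := ⟨l0, Finset.mem_univ _⟩
    set bl : Fin (K*N) → ℝ := fun l =>
      if d l = 0 then 1 else min (x l) (1 - x l) / |d l| with hbl
    set bw : Fin (K*N) → ℝ := fun m =>
      if (∑ l ∈ window m, d l) = 0 then 1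
      else (((N * g0 : ℕ) : ℝ) - ∑ l ∈ window m, x l) / |∑ l ∈ window m, d l| with hbw
    have hblpos : ∀ l, 0 < bl l := by
      intro l
      by_cases h : d l = 0
      · simp [hbl, h]
      · have hlF : l ∈ Frac := by
          by_contra hlF
          exact h (hdsupp l hlF)
        obtain ⟨h1, h2⟩ := hFracbd l hlF
        simp only [hbl, h, if_false]
        apply div_pos (lt_min h1 (by linarith)) (abs_pos.2 h)
    have hbwpos : ∀ m, 0 < bw m := by
      intro m
      by_cases h : (∑ l ∈ window m, d l) = 0
      · simp [hbw, h]
      · have hmT : m ∉ T := by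
          intro hmT
          exact h (hdT m hmT)
        have hlt : ∑ l ∈ window m, x l < ((N * g0 : ℕ) : ℝ) := by
          rcases lt_or_eq_of_le (hxw m) with h' | h'
          · exact h'
          · exact absurd (show m ∈ T from Finset.mem_filter.2 ⟨Finset.mem_univ m, h'⟩) hmT
        simp only [hbw, h, if_false]
        apply div_pos (by linarith) (abs_pos.2 h)
    set ε : ℝ := min (Finset.univ.inf' hne bl) (Finset.univ.inf' hne bw) with hε
    have hεpos : 0 < ε := by
      apply lt_min
      · exact (Finset.lt_inf'_iff hne).2 fun l _ => hblpos l
      · exact (Finset.lt_inf'_iff hne).2 fun m _ => hbwpos m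
    have hεbl : ∀ l, ε ≤ bl l := fun l =>
      le_trans (min_le_left _ _) (Finset.inf'_le _ (Finset.mem_univ l))
    have hεbw : ∀ m, ε ≤ bw m := fun m =>
      le_trans (min_le_right _ _) (Finset.inf'_le _ (Finset.mem_univ m))
    -- the two perturbed points
    have hbound : ∀ (σ : ℝ), |σ| = 1 → ∀ l, x l + σ * (ε * d l) ∈ Icc (0:ℝ) 1 := by
      intro σ hσ l
      by_cases h : d l = 0
      · simpa [h] using hxbd l
      · have h1 : ε * |d l| ≤ min (x l) (1 - x l) := by
          have := hεbl l
          rw [hbl] at this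
          simp only [h, if_false] at this
          rw [div_eq_mul_inv] at this
          have habs : 0 < |d l| := abs_pos.2 h
          calc ε * |d l| ≤ (min (x l) (1 - x l) * |d l|⁻¹) * |d l| := by
                apply mul_le_mul_of_nonneg_right this (le_of_lt habs)
            _ = min (x l) (1 - x l) := by field_simp
        have h2 : |σ * (ε * d l)| = ε * |d l| := by
          rw [abs_mul, hσ, one_mul, abs_mul, abs_of_pos hεpos]
        have h3 : min (x l) (1 - x l) ≤ x l := min_le_left _ _
        have h4 : min (x l) (1 - x l) ≤ 1 - x l := min_le_right _ _
        have h5 := neg_abs_le (σ * (ε * d l))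
        have h6 := le_abs_self (σ * (ε * d l))
        constructor
        · nlinarith
        · nlinarith
    have hwin : ∀ (σ : ℝ), |σ| = 1 → ∀ m,
        ∑ l ∈ window m, (x l + σ * (ε * d l)) ≤ ((N * g0 : ℕ) : ℝ) := by
      intro σ hσ m
      rw [Finset.sum_add_distrib]
      have hsd : ∑ l ∈ window m, σ * (ε * d l) = σ * ε * ∑ l ∈ window m, d l := by
        rw [Finset.mul_sum]
        apply Finset.sum_congr rfl
        intro l _
        ring
      rw [hsd]
      by_cases h : (∑ l ∈ window m, d l) = 0
      · rw [h]
        simpa using hxw m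
      · have h1 : ε * |∑ l ∈ window m, d l| ≤ ((N * g0 : ℕ) : ℝ) - ∑ l ∈ window m, x l := by
          have := hεbw m
          rw [hbw] at this
          simp only [h, if_false] at this
          have habs : 0 < |∑ l ∈ window m, d l| := abs_pos.2 h
          rw [div_eq_mul_inv] at this
          calc ε * |∑ l ∈ window m, d l|
              ≤ ((((N * g0 : ℕ) : ℝ) - ∑ l ∈ window m, x l) * |∑ l ∈ window m, d l|⁻¹) *
                |∑ l ∈ window m, d l| := by
                apply mul_le_mul_of_nonneg_right this (le_of_lt habs)
            _ = ((N * g0 : ℕ) : ℝ) - ∑ l ∈ window m, x l := by field_simp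
        have h2 : σ * ε * ∑ l ∈ window m, d l ≤ ε * |∑ l ∈ window m, d l| := by
          calc σ * ε * ∑ l ∈ window m, d l ≤ |σ * ε * ∑ l ∈ window m, d l| := le_abs_self _
            _ = ε * |∑ l ∈ window m, d l| := by
                rw [abs_mul, abs_mul, hσ, one_mul, abs_of_pos hεpos]
        linarith
    set x₁ : Fin (K*N) → ℝ := fun l => x l + 1 * (ε * d l) with hx₁
    set x₂ : Fin (K*N) → ℝ := fun l => x l + (-1) * (ε * d l) with hx₂
    have hx₁P : x₁ ∈ {δ : Fin (K * N) → ℝ |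
        (∀ l, δ l ∈ Icc (0:ℝ) 1) ∧
        ∀ m : Fin (K * N),
          (∑ l ∈ Finset.univ.filter
            (fun l : Fin (K * N) =>
              (m : ℕ) + 1 - N * W0 ≤ (l : ℕ) ∧ (l : ℕ) ≤ (m : ℕ)), δ l)
            ≤ ((N * g0 : ℕ) : ℝ)} :=
      ⟨hbound 1 (by norm_num), hwin 1 (by norm_num)⟩
    have hx₂P : x₂ ∈ {δ : Fin (K * N) → ℝ |
        (∀ l, δ l ∈ Icc (0:ℝ) 1) ∧
        ∀ m : Fin (K * N),
          (∑ l ∈ Finset.univ.filter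
            (fun l : Fin (K * N) =>
              (m : ℕ) + 1 - N * W0 ≤ (l : ℕ) ∧ (l : ℕ) ≤ (m : ℕ)), δ l)
            ≤ ((N * g0 : ℕ) : ℝ)} :=
      ⟨hbound (-1) (by norm_num), hwin (-1) (by norm_num)⟩
    have hseg : x ∈ openSegment ℝ x₁ x₂ := by
      refine ⟨1/2, 1/2, by norm_num, by norm_num, by norm_num, ?_⟩
      funext l
      simp only [hx₁, hx₂, Pi.add_apply, Pi.smul_apply, smul_eq_mul]
      ring
    have := (hext hx₁P hx₂P hseg)
    obtain ⟨l, hl⟩ := Function.ne_iff.1 hd0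
    have := congrFun this l
    simp only [hx₁] at this
    have : ε * d l = 0 := by linarith
    rcases mul_eq_zero.1 this with h | h
    · exact absurd h (ne_of_gt hεpos)
    · exact hl h
  · -- Case 2 : trivial kernel, integrality via intA
    have hker' : ∀ d : Fin (K*N) → ℝ, (∀ l, l ∉ Frac → d l = 0) →
        (∀ m ∈ T, ∑ l ∈ window m, d l = 0) → d = 0 := by
      intro d h1 h2
      by_contra h0
      exact hker ⟨d, h0, h1, h2⟩
    set p := Frac.card with hp
    set e := Frac.orderIsoOfFin rfl with he
    set f : Fin p → Fin (K*N) := fun i => ((e i : {l // l ∈ Frac}) : Fin (K*N)) with hf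
    have hfF : ∀ i, f i ∈ Frac := fun i => (e i).2
    have hfmono : StrictMono f := by
      intro i j hij
      exact Subtype.coe_lt_coe.2 (e.strictMono hij)
    have hfinj : Function.Injective f := hfmono.injective
    have hsymmf : ∀ (l : Fin (K*N)) (hl : l ∈ Frac), f (e.symm ⟨l, hl⟩) = l := by
      intro l hl
      simp [hf]
    have hfsurj : ∀ l ∈ Frac, ∃ i, f i = l := fun l hl => ⟨e.symm ⟨l, hl⟩, hsymmf l hl⟩
    set cnt : ℕ → ℕ := fun c => (Finset.filter (fun l : Fin (K*N) => (l:ℕ) < c) Frac).card with hcntdef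
    have hcnt : ∀ (c : ℕ) (i : Fin p), ((i:ℕ) < cnt c ↔ ((f i : Fin (K*N)) : ℕ) < c) := by
      intro c i
      set Q := Finset.univ.filter (fun j : Fin p => ((f j : Fin (K*N)) : ℕ) < c) with hQ
      have hQdc : ∀ j ∈ Q, ∀ j', j' ≤ j → j' ∈ Q := by
        intro j hj j' hj'
        simp only [hQ, Finset.mem_filter, Finset.mem_univ, true_and] at hj ⊢
        have h1 : f j' ≤ f j := hfmono.le_iff_le.2 hj'
        have h2 : ((f j' : Fin (K*N)) : ℕ) ≤ ((f j : Fin (K*N)) : ℕ) := h1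
        omega
      have himg : Finset.filter (fun l : Fin (K*N) => (l:ℕ) < c) Frac = Q.image f := by
        ext l
        simp only [hQ, Finset.mem_filter, Finset.mem_univ, true_and, Finset.mem_image]
        constructor
        · rintro ⟨hlF, hlc⟩
          obtain ⟨i, rfl⟩ := hfsurj l hlF
          exact ⟨i, hlc, rfl⟩
        · rintro ⟨i, hic, rfl⟩
          exact ⟨hfF i, hic⟩
      have hcard : cnt c = Q.card := by
        rw [hcntdef]
        simp only
        rw [himg, Finset.card_image_of_injective _ hfinj]
      rw [hcard, ← dc Q hQdc i]
      simp [hQ]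
    have hcntle : ∀ c, cnt c ≤ p := fun c => Finset.card_filter_le _ _
    have hcnt1 : ∀ m, (Frac ∩ window m).Nonempty → 1 ≤ cnt ((m:ℕ)+1) := by
      intro m hm
      obtain ⟨l, hl⟩ := hm
      have hlF := (Finset.mem_inter.1 hl).1
      have hlw := (Finset.mem_inter.1 hl).2
      have hlm : (l:ℕ) < (m:ℕ)+1 := by
        have := (Finset.mem_filter.1 hlw).2.2
        omega
      have : l ∈ Finset.filter (fun l : Fin (K*N) => (l:ℕ) < (m:ℕ)+1) Frac := Finset.mem_filter.2 ⟨hlF, hlm⟩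
      have := Finset.card_pos.2 ⟨l, this⟩
      simpa [hcntdef] using this
    have hmemI : ∀ m, (Frac ∩ window m).Nonempty → ∀ i : Fin p,
        ((i:ℕ) ∈ Finset.Icc (cnt ((m:ℕ)+1 - N*W0)) (cnt ((m:ℕ)+1) - 1) ↔ f i ∈ window m) := by
      intro m hm i
      have h1 := hcnt ((m:ℕ)+1 - N*W0) i
      have h2 := hcnt ((m:ℕ)+1) i
      have h3 := hcnt1 m hm
      rw [Finset.mem_Icc]
      have h4 : f i ∈ window m ↔ ((m:ℕ)+1 - N*W0 ≤ ((f i : Fin (K*N)):ℕ) ∧ ((f i : Fin (K*N)):ℕ) ≤ (m:ℕ)) := by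
        simp [hwindow]
      rw [h4]
      omega
    have hchain : ∀ (y : Fin (K*N) → ℝ) (ty : ℕ → ℝ), (∀ i : Fin p, ty (i:ℕ) = y (f i)) →
        ∀ m, (Frac ∩ window m).Nonempty →
        ∑ j ∈ Finset.Icc (cnt ((m:ℕ)+1 - N*W0)) (cnt ((m:ℕ)+1) - 1), ty j
          = ∑ l ∈ Frac ∩ window m, y l := by
      intro y ty hy m hm
      set Qm := Finset.univ.filter (fun i : Fin p => f i ∈ window m) with hQm
      have h1 : Finset.Icc (cnt ((m:ℕ)+1 - N*W0)) (cnt ((m:ℕ)+1) - 1)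
          = Qm.image (fun i : Fin p => (i:ℕ)) := by
        ext j
        simp only [hQm, Finset.mem_image, Finset.mem_filter, Finset.mem_univ, true_and]
        constructor
        · intro hj
          have hjb := Finset.mem_Icc.1 hj
          have hjp : j < p := by
            have := hcntle ((m:ℕ)+1)
            have := hcnt1 m hm
            omega
          exact ⟨⟨j, hjp⟩, (hmemI m hm ⟨j, hjp⟩).1 hj, rfl⟩
        · rintro ⟨i, hi, rfl⟩
          exact (hmemI m hm i).2 hi
      have h2 : Frac ∩ window m = Qm.image f := by
        ext l
        simp only [hQm, Finset.mem_image, Finset.mem_filter, Finset.mem_univ, true_and,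
          Finset.mem_inter]
        constructor
        · rintro ⟨hlF, hlw⟩
          obtain ⟨i, rfl⟩ := hfsurj l hlF
          exact ⟨i, hlw, rfl⟩
        · rintro ⟨i, hiw, rfl⟩
          exact ⟨hfF i, hiw⟩
      rw [h1, h2, Finset.sum_image (fun a _ b _ hab => Fin.val_injective hab),
        Finset.sum_image (fun a _ b _ hab => hfinj hab)]
      exact Finset.sum_congr rfl fun i _ => hy i
    set xt : ℕ → ℝ := fun j => if h : j < p then x (f ⟨j, h⟩) else 0 with hxt
    have hxtf : ∀ i : Fin p, xt (i:ℕ) = x (f i) := by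
      intro i
      simp [hxt, i.is_lt]
    set T' := T.filter (fun m => (Frac ∩ window m).Nonempty) with hT'
    set R : Finset (ℕ × ℕ) :=
      T'.image (fun m : Fin (K*N) => (cnt ((m:ℕ)+1 - N*W0), cnt ((m:ℕ)+1) - 1)) with hR
    have hmemR : ∀ r ∈ R, ∃ m, m ∈ T ∧ (Frac ∩ window m).Nonempty ∧
        r = (cnt ((m:ℕ)+1 - N*W0), cnt ((m:ℕ)+1) - 1) := by
      intro r hr
      obtain ⟨m, hm, hmr⟩ := Finset.mem_image.1 hr
      obtain ⟨hmT, hmne⟩ := Finset.mem_filter.1 hm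
      exact ⟨m, hmT, hmne, hmr.symm⟩
    have hord : ∀ r ∈ R, r.1 ≤ r.2 := by
      intro r hr
      obtain ⟨m, hmT, hmne, rfl⟩ := hmemR r hr
      have hmne2 := hmne
      obtain ⟨l, hl⟩ := hmne2
      obtain ⟨i, rfl⟩ := hfsurj l (Finset.mem_inter.1 hl).1
      have := (hmemI m hmne i).2 (Finset.mem_inter.1 hl).2
      have := Finset.mem_Icc.1 this
      omega
    have hlt : ∀ r ∈ R, r.2 < p := by
      intro r hr
      obtain ⟨m, hmT, hmne, rfl⟩ := hmemR r hr
      have := hcntle ((m:ℕ)+1)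
      have := hcnt1 m hmne
      have hpp : 0 < p := Finset.card_pos.2 ⟨l0, hl0F⟩
      simp only
      omega
    have hint : ∀ r ∈ R, ∃ z : ℤ, ∑ i ∈ Finset.Icc r.1 r.2, xt i = (z : ℝ) := by
      intro r hr
      obtain ⟨m, hmT, hmne, rfl⟩ := hmemR r hr
      have hch := hchain x xt hxtf m hmne
      have hsplit : window m = (Frac ∩ window m) ∪ (window m \ Frac) := by
        ext l
        simp only [Finset.mem_union, Finset.mem_inter, Finset.mem_sdiff]
        tauto
      have hdisj : Disjoint (Frac ∩ window m) (window m \ Frac) := by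
        rw [Finset.disjoint_left]
        intro l h1 h2
        exact (Finset.mem_sdiff.1 h2).2 (Finset.mem_inter.1 h1).1
      have hg : ∑ l ∈ window m, x l = ((N * g0 : ℕ) : ℝ) := (Finset.mem_filter.1 hmT).2
      rw [hsplit, Finset.sum_union hdisj] at hg
      obtain ⟨zw, hzw⟩ := sum_int (window m \ Frac) x (by
        intro l hl
        have hlF := (Finset.mem_sdiff.1 hl).2
        have : x l = 0 ∨ x l = 1 := by
          by_contra hcc
          push_neg at hcc
          exact hlF (Finset.mem_filter.2 ⟨Finset.mem_univ _, hcc.1, hcc.2⟩)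
        rcases this with h | h
        · exact ⟨0, by rw [h]; norm_num⟩
        · exact ⟨1, by rw [h]; norm_num⟩)
      refine ⟨(N * g0 : ℤ) - zw, ?_⟩
      simp only
      rw [hch]
      push_cast
      push_cast at hg
      linarith
    have hinj : ∀ td : ℕ → ℝ, (∀ i, p ≤ i → td i = 0) →
        (∀ r ∈ R, ∑ i ∈ Finset.Icc r.1 r.2, td i = 0) → ∀ i, td i = 0 := by
      intro td hsupp hrows
      set d : Fin (K*N) → ℝ :=
        fun l => if hl : l ∈ Frac then td ((e.symm ⟨l, hl⟩ : Fin p) : ℕ) else 0 with hd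
      have hdf : ∀ i : Fin p, d (f i) = td (i:ℕ) := by
        intro i
        have hfi : f i ∈ Frac := hfF i
        rw [hd]
        simp only
        rw [dif_pos hfi]
        congr 2
        rw [show (⟨f i, hfi⟩ : {l // l ∈ Frac}) = e i from Subtype.ext rfl, e.symm_apply_apply]
      have hdK : d = 0 := by
        apply hker' d
        · intro l hl
          rw [hd]
          simp only
          rw [dif_neg hl]
        · intro m hmT
          by_cases hm : (Frac ∩ window m).Nonempty
          · have hsub : ∑ l ∈ window m, d l = ∑ l ∈ Frac ∩ window m, d l := by
              refine (Finset.sum_subset Finset.inter_subset_right ?_).symm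
              intro l hlw hln
              rw [hd]
              simp only
              rw [dif_neg]
              intro hlF
              exact hln (Finset.mem_inter.2 ⟨hlF, hlw⟩)
            rw [hsub, ← hchain d td (fun i => (hdf i).symm) m hm]
            exact hrows (cnt ((m:ℕ)+1 - N*W0), cnt ((m:ℕ)+1) - 1)
              (Finset.mem_image.2 ⟨m, Finset.mem_filter.2 ⟨hmT, hm⟩, rfl⟩)
          · rw [Finset.not_nonempty_iff_eq_empty] at hm
            apply Finset.sum_eq_zero
            intro l hlw
            rw [hd]
            simp only
            rw [dif_neg]
            intro hlF
            have : l ∈ Frac ∩ window m := Finset.mem_inter.2 ⟨hlF, hlw⟩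
            rw [hm] at this
            exact absurd this (Finset.notMem_empty l)
      intro j
      by_cases hj : j < p
      · have h1 := congrFun hdK (f ⟨j, hj⟩)
        rw [hdf ⟨j, hj⟩] at h1
        simpa using h1
      · exact hsupp j (le_of_not_gt hj)
    -- apply intA and derive the contradiction
    set i0 : Fin p := e.symm ⟨l0, hl0F⟩ with hi0
    obtain ⟨z, hz⟩ := intA p xt R hord hlt hint hinj (i0:ℕ) i0.is_lt
    rw [hxtf i0, hsymmf l0 hl0F] at hz
    obtain ⟨hb1, hb2⟩ := hFracbd l0 hl0F
    rw [hz] at hb1 hb2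
    have hz1 : (0:ℤ) < z := by exact_mod_cast hb1
    have hz2 : z < 1 := by exact_mod_cast hb2
    omega
end
end

section
/- Let Δt > 0, K a positive integer, 0 < γ ≤ Γ with γ/Δt and Γ/Δt positive integers such that Γ/Δt ≤ K, and η⁺, η⁻ ∈ (0,1]. Let 𝐱^b, 𝐱^r ∈ ℝ^K have nonnegative components, let 𝐝 ∈ ℝ^K, and fix y₀ ∈ ℝ and k ∈ {0,1,…,K}. Then max_{𝛅 ∈ D_K} y_k(𝐱^b,𝐱^r,𝛅,y₀) = y₀ + max_{𝛅 ∈ D_K⁺} Δt Σ_{l=1}^{k} ( η⁺·(x^b_l + δ_l x^r_l) − d_l ), where both maxima are attained. -/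
open MeasureTheory Set

noncomputable section

/-- the worst-case maximum of the discrete state-of-charge over
`D_K` is attained and equals `y₀` plus the maximum of the linearized expression
over `D_K⁺`. -/
theorem stmt_15 (Δt ηp ηm : ℝ) (K W g : ℕ) (hΔt : 0 < Δt)
    (hg : 0 < g) (hgW : g ≤ W) (hWK : W ≤ K)
    (hηp : ηp ∈ Ioc (0:ℝ) 1) (hηm : ηm ∈ Ioc (0:ℝ) 1)
    (xb xr d : Fin K → ℝ) (hxb : ∀ l, 0 ≤ xb l) (hxr : ∀ l, 0 ≤ xr l)
    (y0 : ℝ) (k : ℕ) (hk : k ≤ K) :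
    ∃ M : ℝ,
      IsGreatest {v : ℝ | ∃ δ ∈ DK K W g, v = ysoc Δt ηp ηm xb xr δ d y0 k} M ∧
      IsGreatest {v : ℝ | ∃ δ ∈ DKplus K W g,
        v = y0 + Δt * ∑ l ∈ Finset.univ.filter (fun l : Fin K => (l : ℕ) < k),
          (ηp * (xb l + δ l * xr l) - d l)} M := by
  obtain ⟨hηp0, hηp1⟩ := hηp
  obtain ⟨hηm0, hηm1⟩ := hηm
  set F : (Fin K → ℝ) → ℝ := fun δ =>
    y0 + Δt * ∑ l ∈ Finset.univ.filter (fun l : Fin K => (l : ℕ) < k),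
      (ηp * (xb l + δ l * xr l) - d l) with hF
  -- DKplus is compact
  have hsub : DKplus K W g ⊆ Icc (fun _ => (-1:ℝ)) (fun _ => (1:ℝ)) := by
    rintro δ ⟨⟨h1, _⟩, _⟩
    constructor <;> intro l
    · have := h1 l; exact neg_le_of_abs_le this
    · exact le_of_abs_le (h1 l)
  have hclosed : IsClosed (DKplus K W g) := by
    unfold DKplus DK
    rw [Set.setOf_and]
    apply IsClosed.inter
    apply IsClosed.inter
    · rw [Set.setOf_forall]
      exact isClosed_iInter fun l => isClosed_le ((continuous_apply l).abs) continuous_const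
    · rw [Set.setOf_forall]
      refine isClosed_iInter fun j => isClosed_le ?_ continuous_const
      exact continuous_finset_sum _ fun l _ => (continuous_apply l).abs
    · rw [Set.setOf_forall]
      exact isClosed_iInter fun l => isClosed_le continuous_const (continuous_apply l)
  have hcompact : IsCompact (DKplus K W g) :=
    IsCompact.of_isClosed_subset isCompact_Icc hclosed hsub
  have hne : (DKplus K W g).Nonempty := by
    refine ⟨0, ⟨⟨fun l => by simp, fun j => ?_⟩, fun l => le_refl 0⟩⟩
    simp only [Pi.zero_apply, abs_zero, Finset.sum_const_zero]
    exact_mod_cast Nat.zero_le g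
  have hFc : Continuous F := by
    apply continuous_const.add
    apply continuous_const.mul
    exact continuous_finset_sum _ fun l _ => by
      exact ((continuous_const.mul (continuous_const.add ((continuous_apply l).mul continuous_const))).sub continuous_const)
  obtain ⟨δ₀, hδ₀, hmax⟩ := hcompact.exists_isMaxOn hne hFc.continuousOn
  -- for nonnegative δ, ysoc equals F
  have key : ∀ δ : Fin K → ℝ, (∀ l, 0 ≤ δ l) → ysoc Δt ηp ηm xb xr δ d y0 k = F δ := by
    intro δ hδ
    unfold ysoc
    rw [hF]
    congr 1
    congr 1
    apply Finset.sum_congr rfl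
    intro l _
    have hx : 0 ≤ xb l + δ l * xr l := add_nonneg (hxb l) (mul_nonneg (hδ l) (hxr l))
    rw [max_eq_left hx, max_eq_right (neg_nonpos.mpr hx)]
    ring
  -- monotonicity: ysoc δ ≤ ysoc |δ|
  have mono : ∀ δ : Fin K → ℝ,
      ysoc Δt ηp ηm xb xr δ d y0 k ≤ ysoc Δt ηp ηm xb xr (fun l => |δ l|) d y0 k := by
    intro δ
    unfold ysoc
    apply (add_le_add_iff_left _).mpr
    apply mul_le_mul_of_nonneg_left _ hΔt.le
    apply Finset.sum_le_sum
    intro l _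
    have hle : xb l + δ l * xr l ≤ xb l + |δ l| * xr l :=
      (add_le_add_iff_left _).mpr (mul_le_mul_of_nonneg_right (le_abs_self _) (hxr l))
    have h1 : ηp * max (xb l + δ l * xr l) 0 ≤ ηp * max (xb l + |δ l| * xr l) 0 :=
      mul_le_mul_of_nonneg_left (max_le_max hle le_rfl) hηp0.le
    have h2 : (1/ηm) * max (-(xb l + |δ l| * xr l)) 0 ≤ (1/ηm) * max (-(xb l + δ l * xr l)) 0 :=
      mul_le_mul_of_nonneg_left (max_le_max (neg_le_neg hle) le_rfl) (by positivity)
    linarith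
  -- |δ| ∈ DKplus for δ ∈ DK
  have habs : ∀ δ : Fin K → ℝ, δ ∈ DK K W g → (fun l => |δ l|) ∈ DKplus K W g := by
    rintro δ ⟨h1, h2⟩
    refine ⟨⟨fun l => ?_, fun j => ?_⟩, fun l => abs_nonneg _⟩
    · rw [abs_abs]; exact h1 l
    · simpa only [abs_abs] using h2 j
  refine ⟨F δ₀, ⟨⟨δ₀, hδ₀.1, (key δ₀ hδ₀.2).symm⟩, ?_⟩, ⟨⟨δ₀, hδ₀, rfl⟩, ?_⟩⟩
  · rintro v ⟨δ, hδ, rfl⟩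
    calc ysoc Δt ηp ηm xb xr δ d y0 k
        ≤ ysoc Δt ηp ηm xb xr (fun l => |δ l|) d y0 k := mono δ
      _ = F (fun l => |δ l|) := key _ fun l => abs_nonneg _
      _ ≤ F δ₀ := hmax (habs δ hδ)
  · rintro v ⟨δ, hδ, rfl⟩
    exact hmax hδ
end
end
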